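/- Let Δ₁ = conv{(0,0),(1,0),(0,1)} and Δ₂ = conv{(1,0),(0,1),(1,1)} in ℝ², let T ⊂ ℤ² be a finite nonempty set, and let Δ = conv(T); assume Δ is not a single point. Then for each i ∈ {1, 2}: the area of the Minkowski sum Δ_i + Δ equals 3/2 if Δ is a translate of one of conv{(0,0),(1,0)}, conv{(0,0),(0,1)}, conv{(1,0),(0,1)}; equals 2 if Δ is a translate of Δ_i; and is at least 5/2 in all other cases. -/

import Mathlib

open scoped Pointwise
open MeasureTheory
open scoped ENNReal NNReal

lemma vol_slab_x (a b : ℝ) (hab : a ≤ b) (g h : ℝ → ℝ) (hg : Continuous g) (hh : Continuous h)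
    (hgh : ∀ x ∈ Set.Icc a b, g x ≤ h x) :
    volume {p : ℝ × ℝ | a ≤ p.1 ∧ p.1 ≤ b ∧ g p.1 ≤ p.2 ∧ p.2 ≤ h p.1}
      = ENNReal.ofReal (∫ x in a..b, (h x - g x)) := by
  set S := {p : ℝ × ℝ | a ≤ p.1 ∧ p.1 ≤ b ∧ g p.1 ≤ p.2 ∧ p.2 ≤ h p.1} with hSdef
  have hS : MeasurableSet S := by
    apply MeasurableSet.inter (measurableSet_le measurable_const measurable_fst)
    apply MeasurableSet.inter (measurableSet_le measurable_fst measurable_const)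
    exact MeasurableSet.inter
      (measurableSet_le (hg.measurable.comp measurable_fst) measurable_snd)
      (measurableSet_le measurable_snd (hh.measurable.comp measurable_fst))
  rw [MeasureTheory.Measure.volume_eq_prod, Measure.prod_apply hS]
  have key : ∀ x : ℝ, volume (Prod.mk x ⁻¹' S)
      = Set.indicator (Set.Icc a b) (fun x => ENNReal.ofReal (h x - g x)) x := by
    intro x
    by_cases hx : x ∈ Set.Icc a b
    · have : Prod.mk x ⁻¹' S = Set.Icc (g x) (h x) := by
        ext y; simp [hSdef, hx.1, hx.2, and_comm]
      rw [this, Real.volume_Icc, Set.indicator_of_mem hx]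
    · have : Prod.mk x ⁻¹' S = ∅ := by
        ext y
        simp only [hSdef, Set.mem_preimage, Set.mem_setOf_eq, Set.mem_empty_iff_false, iff_false]
        rintro ⟨h1, h2, -⟩
        exact hx ⟨h1, h2⟩
      rw [this, measure_empty, Set.indicator_of_notMem hx]
  rw [lintegral_congr key, lintegral_indicator measurableSet_Icc,
    ← MeasureTheory.ofReal_integral_eq_lintegral_ofReal]
  · rw [MeasureTheory.integral_Icc_eq_integral_Ioc, ← intervalIntegral.integral_of_le hab]
  · exact (hh.sub hg).integrableOn_Icc
  · filter_upwards [ae_restrict_mem measurableSet_Icc] with x hx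
    exact sub_nonneg.2 (hgh x hx)

lemma vol_slab_y (a b : ℝ) (hab : a ≤ b) (g h : ℝ → ℝ) (hg : Continuous g) (hh : Continuous h)
    (hgh : ∀ x ∈ Set.Icc a b, g x ≤ h x) :
    volume {p : ℝ × ℝ | a ≤ p.2 ∧ p.2 ≤ b ∧ g p.2 ≤ p.1 ∧ p.1 ≤ h p.2}
      = ENNReal.ofReal (∫ x in a..b, (h x - g x)) := by
  set S := {p : ℝ × ℝ | a ≤ p.2 ∧ p.2 ≤ b ∧ g p.2 ≤ p.1 ∧ p.1 ≤ h p.2} with hSdef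
  have hS : MeasurableSet S := by
    apply MeasurableSet.inter (measurableSet_le measurable_const measurable_snd)
    apply MeasurableSet.inter (measurableSet_le measurable_snd measurable_const)
    exact MeasurableSet.inter
      (measurableSet_le (hg.measurable.comp measurable_snd) measurable_fst)
      (measurableSet_le measurable_fst (hh.measurable.comp measurable_snd))
  rw [MeasureTheory.Measure.volume_eq_prod, Measure.prod_apply_symm hS]
  have key : ∀ y : ℝ, volume ((fun x => (x, y)) ⁻¹' S)
      = Set.indicator (Set.Icc a b) (fun y => ENNReal.ofReal (h y - g y)) y := by
    intro y
    by_cases hy : y ∈ Set.Icc a b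
    · have : (fun x => (x, y)) ⁻¹' S = Set.Icc (g y) (h y) := by
        ext x; simp [hSdef, hy.1, hy.2, and_comm]
      rw [this, Real.volume_Icc, Set.indicator_of_mem hy]
    · have : (fun x => (x, y)) ⁻¹' S = ∅ := by
        ext x
        simp only [hSdef, Set.mem_preimage, Set.mem_setOf_eq, Set.mem_empty_iff_false, iff_false]
        rintro ⟨h1, h2, -⟩
        exact hy ⟨h1, h2⟩
      rw [this, measure_empty, Set.indicator_of_notMem hy]
  rw [lintegral_congr key, lintegral_indicator measurableSet_Icc,
    ← MeasureTheory.ofReal_integral_eq_lintegral_ofReal]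
  · rw [MeasureTheory.integral_Icc_eq_integral_Ioc, ← intervalIntegral.integral_of_le hab]
  · exact (hh.sub hg).integrableOn_Icc
  · filter_upwards [ae_restrict_mem measurableSet_Icc] with x hx
    exact sub_nonneg.2 (hgh x hx)

lemma graph_null (φ : ℝ → ℝ) (hφ : Measurable φ) : volume {p : ℝ × ℝ | p.2 = φ p.1} = 0 := by
  have hS : MeasurableSet {p : ℝ × ℝ | p.2 = φ p.1} :=
    measurableSet_eq_fun measurable_snd (hφ.comp measurable_fst)
  rw [MeasureTheory.Measure.volume_eq_prod, Measure.prod_apply hS]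
  have : ∀ x : ℝ, volume (Prod.mk x ⁻¹' {p : ℝ × ℝ | p.2 = φ p.1}) = 0 := by
    intro x
    have : Prod.mk x ⁻¹' {p : ℝ × ℝ | p.2 = φ p.1} = {φ x} := by
      ext y; simp [Set.mem_singleton_iff]
    rw [this, Real.volume_singleton]
  simp [this]

lemma vert_null (c : ℝ) : volume {p : ℝ × ℝ | p.1 = c} = 0 := by
  have : {p : ℝ × ℝ | p.1 = c} = ({c} : Set ℝ) ×ˢ (Set.univ : Set ℝ) := by
    ext ⟨x, y⟩; simp [eq_comm]
  rw [this, MeasureTheory.Measure.volume_eq_prod, Measure.prod_prod]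
  simp

lemma horiz_null (c : ℝ) : volume {p : ℝ × ℝ | p.2 = c} = 0 :=
  graph_null (fun _ => c) measurable_const

lemma diag_null : volume {p : ℝ × ℝ | p.2 = p.1} = 0 := graph_null _ measurable_id

lemma antidiag_null (c : ℝ) : volume {p : ℝ × ℝ | p.1 + p.2 = c} = 0 := by
  have : {p : ℝ × ℝ | p.1 + p.2 = c} = {p : ℝ × ℝ | p.2 = c - p.1} := by
    ext p; constructor <;> intro h1 <;> simp at * <;> linarith
  rw [this]
  exact graph_null _ (measurable_const.sub measurable_id)

/-- The triangle `conv{(0,0), (1,0), (0,1)} ⊂ ℝ²`. -/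
noncomputable def Δ₁ : Set (ℝ × ℝ) :=
  convexHull ℝ {((0 : ℝ), (0 : ℝ)), ((1 : ℝ), (0 : ℝ)), ((0 : ℝ), (1 : ℝ))}

/-- The triangle `conv{(1,0), (0,1), (1,1)} ⊂ ℝ²`. -/
noncomputable def Δ₂ : Set (ℝ × ℝ) :=
  convexHull ℝ {((1 : ℝ), (0 : ℝ)), ((0 : ℝ), (1 : ℝ)), ((1 : ℝ), (1 : ℝ))}

lemma mem_hull2 {P Q z : ℝ × ℝ} (α β : ℝ) (hα : 0 ≤ α) (hβ : 0 ≤ β) (hsum : α + β = 1)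
    (hz : z = α • P + β • Q) : z ∈ convexHull ℝ {P, Q} := by
  rw [convexHull_pair]
  exact ⟨α, β, hα, hβ, hsum, hz.symm⟩

lemma mem_hull3 {P Q R z : ℝ × ℝ} (α β γ : ℝ) (hα : 0 ≤ α) (hβ : 0 ≤ β) (hγ : 0 ≤ γ)
    (hsum : α + β + γ = 1) (hz : z = α • P + β • Q + γ • R) :
    z ∈ convexHull ℝ ({P, Q, R} : Set (ℝ × ℝ)) := by
  rw [show ({P, Q, R} : Set (ℝ × ℝ)) = insert P {Q, R} from rfl,
    convexHull_insert ⟨Q, by simp⟩]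
  by_cases h0 : β + γ = 0
  · have hβ0 : β = 0 := by linarith
    have hγ0 : γ = 0 := by linarith
    have hα1 : α = 1 := by linarith
    have hzP : z = P := by
      rw [hz, hβ0, hγ0, hα1, one_smul, zero_smul, zero_smul, add_zero, add_zero]
    rw [mem_convexJoin]
    refine ⟨P, Set.mem_singleton P, Q, subset_convexHull ℝ _ (by simp), ?_⟩
    rw [hzP]
    exact left_mem_segment ℝ P Q
  · have hs : 0 < β + γ := lt_of_le_of_ne (by linarith) (Ne.symm h0)
    rw [mem_convexJoin]
    refine ⟨P, Set.mem_singleton P, (β / (β + γ)) • Q + (γ / (β + γ)) • R,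
      mem_hull2 (β / (β + γ)) (γ / (β + γ)) (div_nonneg hβ hs.le)
        (div_nonneg hγ hs.le) (by field_simp) rfl, ?_⟩
    refine ⟨α, β + γ, hα, hs.le, by linarith, ?_⟩
    rw [smul_add, smul_smul, smul_smul, mul_div_cancel₀ _ h0, mul_div_cancel₀ _ h0, hz]
    abel

lemma tri_eq : Δ₁ = {p : ℝ × ℝ | 0 ≤ p.1 ∧ 0 ≤ p.2 ∧ p.1 + p.2 ≤ 1} := by
  apply Set.Subset.antisymm
  · apply convexHull_min
    · rintro p (rfl | rfl | rfl) <;> norm_num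
    · rintro p ⟨hp1, hp2, hp3⟩ q ⟨hq1, hq2, hq3⟩ α β hα hβ hαβ
      simp only [Set.mem_setOf_eq, Prod.fst_add, Prod.snd_add, Prod.smul_fst, Prod.smul_snd,
        smul_eq_mul]
      refine ⟨by nlinarith, by nlinarith, by nlinarith⟩
  · rintro ⟨x, y⟩ ⟨h1, h2, h3⟩
    exact mem_hull3 (1 - x - y) x y (by linarith) h1 h2 (by ring)
      (by simp only [Prod.smul_mk, Prod.mk_add_mk, smul_eq_mul, Prod.mk.injEq]
          constructor <;> ring)

lemma tri2_eq : Δ₂ = {p : ℝ × ℝ | p.1 ≤ 1 ∧ p.2 ≤ 1 ∧ 1 ≤ p.1 + p.2} := by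
  apply Set.Subset.antisymm
  · apply convexHull_min
    · rintro p (rfl | rfl | rfl) <;> norm_num
    · rintro p ⟨hp1, hp2, hp3⟩ q ⟨hq1, hq2, hq3⟩ α β hα hβ hαβ
      simp only [Set.mem_setOf_eq, Prod.fst_add, Prod.snd_add, Prod.smul_fst, Prod.smul_snd,
        smul_eq_mul]
      refine ⟨by nlinarith, by nlinarith, by nlinarith⟩
  · rintro ⟨x, y⟩ ⟨h1, h2, h3⟩
    exact mem_hull3 (1 - y) (1 - x) (x + y - 1) (by linarith) (by linarith) (by linarith)
      (by ring) (by simp only [Prod.smul_mk, Prod.mk_add_mk, smul_eq_mul, Prod.mk.injEq]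
                    constructor <;> ring)

lemma segx_eq_sub : convexHull ℝ {((0 : ℝ), (0 : ℝ)), ((1 : ℝ), (0 : ℝ))}
    ⊆ {p : ℝ × ℝ | 0 ≤ p.1 ∧ p.1 ≤ 1 ∧ p.2 = 0} := by
  apply convexHull_min
  · rintro p (rfl | rfl) <;> norm_num
  · rintro p ⟨hp1, hp2, hp3⟩ q ⟨hq1, hq2, hq3⟩ α β hα hβ hαβ
    simp only [Set.mem_setOf_eq, Prod.fst_add, Prod.snd_add, Prod.smul_fst, Prod.smul_snd,
      smul_eq_mul]
    refine ⟨by nlinarith, by nlinarith, by rw [hp3, hq3]; ring⟩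

lemma segy_eq_sub : convexHull ℝ {((0 : ℝ), (0 : ℝ)), ((0 : ℝ), (1 : ℝ))}
    ⊆ {p : ℝ × ℝ | 0 ≤ p.2 ∧ p.2 ≤ 1 ∧ p.1 = 0} := by
  apply convexHull_min
  · rintro p (rfl | rfl) <;> norm_num
  · rintro p ⟨hp1, hp2, hp3⟩ q ⟨hq1, hq2, hq3⟩ α β hα hβ hαβ
    simp only [Set.mem_setOf_eq, Prod.fst_add, Prod.snd_add, Prod.smul_fst, Prod.smul_snd,
      smul_eq_mul]
    refine ⟨by nlinarith, by nlinarith, by rw [hp3, hq3]; ring⟩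

lemma segd_eq_sub : convexHull ℝ {((1 : ℝ), (0 : ℝ)), ((0 : ℝ), (1 : ℝ))}
    ⊆ {p : ℝ × ℝ | 0 ≤ p.1 ∧ 0 ≤ p.2 ∧ p.1 + p.2 = 1} := by
  apply convexHull_min
  · rintro p (rfl | rfl) <;> norm_num
  · rintro p ⟨hp1, hp2, hp3⟩ q ⟨hq1, hq2, hq3⟩ α β hα hβ hαβ
    simp only [Set.mem_setOf_eq, Prod.fst_add, Prod.snd_add, Prod.smul_fst, Prod.smul_snd,
      smul_eq_mul]
    refine ⟨by nlinarith, by nlinarith, by nlinarith⟩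

lemma sum_tri : Δ₁ + Δ₁ = {p : ℝ × ℝ | 0 ≤ p.1 ∧ 0 ≤ p.2 ∧ p.1 + p.2 ≤ 2} := by
  apply Set.Subset.antisymm
  · rw [Set.add_subset_iff]
    intro x hx y hy
    rw [tri_eq] at hx hy
    obtain ⟨h1, h2, h3⟩ := hx
    obtain ⟨h4, h5, h6⟩ := hy
    refine ⟨?_, ?_, ?_⟩ <;> simp only [Set.mem_setOf_eq, Prod.fst_add, Prod.snd_add] <;> linarith
  · rintro ⟨x, y⟩ ⟨h1, h2, h3⟩
    rw [Set.mem_add]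
    refine ⟨(x / 2, y / 2), ?_, (x / 2, y / 2), ?_,
        by simp only [Prod.mk_add_mk, Prod.mk.injEq]; constructor <;> ring⟩
      <;> (rw [tri_eq]
           refine ⟨by simp; linarith, by simp; linarith, by simp; linarith⟩)

lemma sum_segx : Δ₁ + convexHull ℝ {((0 : ℝ), (0 : ℝ)), ((1 : ℝ), (0 : ℝ))}
    = {p : ℝ × ℝ | 0 ≤ p.2 ∧ p.2 ≤ 1 ∧ 0 ≤ p.1 ∧ p.1 + p.2 ≤ 2} := by
  apply Set.Subset.antisymm
  · rw [Set.add_subset_iff]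
    intro x hx y hy
    rw [tri_eq] at hx
    have hy' := segx_eq_sub hy
    obtain ⟨h1, h2, h3⟩ := hx
    obtain ⟨h4, h5, h6⟩ := hy'
    refine ⟨?_, ?_, ?_, ?_⟩ <;> simp only [Set.mem_setOf_eq, Prod.fst_add, Prod.snd_add]
      <;> linarith
  · rintro ⟨x, y⟩ ⟨h1, h2, h3, h4⟩
    rw [Set.mem_add]
    set t := max 0 (x + y - 1) with ht
    have ht0 : 0 ≤ t := le_max_left _ _
    have ht1 : t ≤ 1 := max_le (by linarith) (by linarith)
    have htx : t ≤ x := max_le (by linarith) (by linarith)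
    have hsum : x - t + y ≤ 1 := by
      rcases max_cases 0 (x + y - 1) with ⟨hm, hc⟩ | ⟨hm, hc⟩ <;> rw [ht, hm] <;> linarith
    refine ⟨(x - t, y), ?_, (t, 0), ?_,
      by simp only [Prod.mk_add_mk, Prod.mk.injEq]; constructor <;> ring⟩
    · rw [tri_eq]
      exact ⟨by simpa using by linarith, by simpa using h1, by simpa using hsum⟩
    · exact mem_hull2 (1 - t) t (by linarith) ht0 (by ring)
        (by simp only [Prod.smul_mk, Prod.mk_add_mk, smul_eq_mul, Prod.mk.injEq]
            constructor <;> ring)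

lemma sum_segy : Δ₁ + convexHull ℝ {((0 : ℝ), (0 : ℝ)), ((0 : ℝ), (1 : ℝ))}
    = {p : ℝ × ℝ | 0 ≤ p.1 ∧ p.1 ≤ 1 ∧ 0 ≤ p.2 ∧ p.1 + p.2 ≤ 2} := by
  apply Set.Subset.antisymm
  · rw [Set.add_subset_iff]
    intro x hx y hy
    rw [tri_eq] at hx
    have hy' := segy_eq_sub hy
    obtain ⟨h1, h2, h3⟩ := hx
    obtain ⟨h4, h5, h6⟩ := hy'
    refine ⟨?_, ?_, ?_, ?_⟩ <;> simp only [Set.mem_setOf_eq, Prod.fst_add, Prod.snd_add]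
      <;> linarith
  · rintro ⟨x, y⟩ ⟨h1, h2, h3, h4⟩
    rw [Set.mem_add]
    set t := max 0 (x + y - 1) with ht
    have ht0 : 0 ≤ t := le_max_left _ _
    have ht1 : t ≤ 1 := max_le (by linarith) (by linarith)
    have hty : t ≤ y := max_le (by linarith) (by linarith)
    have hsum : x + (y - t) ≤ 1 := by
      rcases max_cases 0 (x + y - 1) with ⟨hm, hc⟩ | ⟨hm, hc⟩ <;> rw [ht, hm] <;> linarith
    refine ⟨(x, y - t), ?_, (0, t), ?_,
      by simp only [Prod.mk_add_mk, Prod.mk.injEq]; constructor <;> ring⟩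
    · rw [tri_eq]
      exact ⟨by simpa using h1, by simpa using by linarith, by simpa using hsum⟩
    · exact mem_hull2 (1 - t) t (by linarith) ht0 (by ring)
        (by simp only [Prod.smul_mk, Prod.mk_add_mk, smul_eq_mul, Prod.mk.injEq]
            constructor <;> ring)

lemma sum_segd : Δ₁ + convexHull ℝ {((1 : ℝ), (0 : ℝ)), ((0 : ℝ), (1 : ℝ))}
    = {p : ℝ × ℝ | 0 ≤ p.1 ∧ 0 ≤ p.2 ∧ 1 ≤ p.1 + p.2 ∧ p.1 + p.2 ≤ 2} := by
  apply Set.Subset.antisymm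
  · rw [Set.add_subset_iff]
    intro x hx y hy
    rw [tri_eq] at hx
    have hy' := segd_eq_sub hy
    obtain ⟨h1, h2, h3⟩ := hx
    obtain ⟨h4, h5, h6⟩ := hy'
    refine ⟨?_, ?_, ?_, ?_⟩ <;> simp only [Set.mem_setOf_eq, Prod.fst_add, Prod.snd_add]
      <;> linarith
  · rintro ⟨x, y⟩ ⟨h1, h2, h3, h4⟩
    rw [Set.mem_add]
    set t := max 0 (1 - y) with ht
    have ht0 : 0 ≤ t := le_max_left _ _
    have ht1 : t ≤ 1 := max_le (by linarith) (by linarith)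
    have htx : t ≤ x := max_le (by linarith) (by linarith)
    have hty : 1 - y ≤ t := le_max_right _ _
    refine ⟨(x - t, y - (1 - t)), ?_, (t, 1 - t), ?_,
      by simp only [Prod.mk_add_mk, Prod.mk.injEq]; constructor <;> ring⟩
    · rw [tri_eq]
      exact ⟨by simpa using by linarith, by simpa using by linarith, by simpa using by linarith⟩
    · exact mem_hull2 t (1 - t) ht0 (by linarith) (by ring)
        (by simp only [Prod.smul_mk, Prod.mk_add_mk, smul_eq_mul, Prod.mk.injEq]
            constructor <;> ring)

lemma add_vadd_comm' (v : ℝ × ℝ) (A B : Set (ℝ × ℝ)) : A + (v +ᵥ B) = v +ᵥ (A + B) := by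
  ext p
  simp only [Set.mem_add, Set.mem_vadd_set, vadd_eq_add]
  constructor
  · rintro ⟨a, ha, y, ⟨b, hb, rfl⟩, rfl⟩
    exact ⟨a + b, ⟨a, ha, b, hb, rfl⟩, by abel⟩
  · rintro ⟨q, ⟨a, ha, b, hb, rfl⟩, rfl⟩
    exact ⟨a, ha, v + b, ⟨b, hb, rfl⟩, by abel⟩

lemma integral_const_sub (c a b : ℝ) : ∫ x in a..b, (c - x) = (b - a) * c - (b ^ 2 - a ^ 2) / 2 := by
  rw [intervalIntegral.integral_sub intervalIntegrable_const intervalIntegral.intervalIntegrable_id]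
  rw [intervalIntegral.integral_const, integral_id]
  simp [smul_eq_mul, mul_comm]

lemma vol_d1 : volume Δ₁ = ENNReal.ofReal (1 / 2) := by
  have heq : Δ₁ = {p : ℝ × ℝ | 0 ≤ p.1 ∧ p.1 ≤ 1 ∧ (fun _ : ℝ => (0 : ℝ)) p.1 ≤ p.2 ∧
      p.2 ≤ (fun x : ℝ => 1 - x) p.1} := by
    rw [tri_eq]; ext ⟨x, y⟩
    simp only [Set.mem_setOf_eq]
    constructor
    · rintro ⟨a, b, c⟩; exact ⟨a, by linarith, b, by linarith⟩
    · rintro ⟨a, b, c, d⟩; exact ⟨a, c, by linarith⟩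
  rw [heq, vol_slab_x 0 1 (by norm_num) _ _ continuous_const (by continuity)
    (fun x hx => by simpa using by linarith [hx.2])]
  rw [show (fun x : ℝ => (1 : ℝ) - x - (fun _ : ℝ => (0 : ℝ)) x) = fun x : ℝ => (1 : ℝ) - x by
    funext x; simp]
  rw [integral_const_sub]
  norm_num

lemma vol_sum_tri : volume (Δ₁ + Δ₁) = 2 := by
  have heq : Δ₁ + Δ₁ = {p : ℝ × ℝ | 0 ≤ p.1 ∧ p.1 ≤ 2 ∧ (fun _ : ℝ => (0 : ℝ)) p.1 ≤ p.2 ∧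
      p.2 ≤ (fun x : ℝ => 2 - x) p.1} := by
    rw [sum_tri]; ext ⟨x, y⟩
    simp only [Set.mem_setOf_eq]
    constructor
    · rintro ⟨a, b, c⟩; exact ⟨a, by linarith, b, by linarith⟩
    · rintro ⟨a, b, c, d⟩; exact ⟨a, c, by linarith⟩
  rw [heq, vol_slab_x 0 2 (by norm_num) _ _ continuous_const (by continuity)
    (fun x hx => by simpa using by linarith [hx.2])]
  rw [show (fun x : ℝ => (2 : ℝ) - x - (fun _ : ℝ => (0 : ℝ)) x) = fun x : ℝ => (2 : ℝ) - x by
    funext x; simp]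
  rw [integral_const_sub]
  norm_num

lemma ofReal_half : ENNReal.ofReal (1 / 2 : ℝ) = 1 / 2 := by
  rw [ENNReal.ofReal_div_of_pos (by norm_num)]
  norm_num

lemma ofReal_3half : ENNReal.ofReal (3 / 2 : ℝ) = 3 / 2 := by
  rw [ENNReal.ofReal_div_of_pos (by norm_num)]
  norm_num

lemma ofReal_5half : ENNReal.ofReal (5 / 2 : ℝ) = 5 / 2 := by
  rw [ENNReal.ofReal_div_of_pos (by norm_num)]
  norm_num

lemma meas_slab_x (a b : ℝ) (g h : ℝ → ℝ) (hg : Continuous g) (hh : Continuous h) :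
    MeasurableSet {p : ℝ × ℝ | a ≤ p.1 ∧ p.1 ≤ b ∧ g p.1 ≤ p.2 ∧ p.2 ≤ h p.1} := by
  apply MeasurableSet.inter (measurableSet_le measurable_const measurable_fst)
  apply MeasurableSet.inter (measurableSet_le measurable_fst measurable_const)
  exact MeasurableSet.inter
    (measurableSet_le (hg.measurable.comp measurable_fst) measurable_snd)
    (measurableSet_le measurable_snd (hh.measurable.comp measurable_fst))

lemma meas_slab_y (a b : ℝ) (g h : ℝ → ℝ) (hg : Continuous g) (hh : Continuous h) :
    MeasurableSet {p : ℝ × ℝ | a ≤ p.2 ∧ p.2 ≤ b ∧ g p.2 ≤ p.1 ∧ p.1 ≤ h p.2} := by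
  apply MeasurableSet.inter (measurableSet_le measurable_const measurable_snd)
  apply MeasurableSet.inter (measurableSet_le measurable_snd measurable_const)
  exact MeasurableSet.inter
    (measurableSet_le (hg.measurable.comp measurable_snd) measurable_fst)
    (measurableSet_le measurable_fst (hh.measurable.comp measurable_snd))

lemma meas_d1 : MeasurableSet Δ₁ :=
  ((Set.toFinite _).isCompact_convexHull ℝ).isClosed.measurableSet

lemma meas_d2 : MeasurableSet Δ₂ :=
  ((Set.toFinite _).isCompact_convexHull ℝ).isClosed.measurableSet

lemma vol_d1' : volume Δ₁ = ENNReal.ofReal (1 / 2) := vol_d1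

lemma vol_sum_segx : volume (Δ₁ + convexHull ℝ {((0 : ℝ), (0 : ℝ)), ((1 : ℝ), (0 : ℝ))})
    = 3 / 2 := by
  have heq : Δ₁ + convexHull ℝ {((0 : ℝ), (0 : ℝ)), ((1 : ℝ), (0 : ℝ))}
      = {p : ℝ × ℝ | 0 ≤ p.2 ∧ p.2 ≤ 1 ∧ (fun _ : ℝ => (0 : ℝ)) p.2 ≤ p.1 ∧
          p.1 ≤ (fun y : ℝ => 2 - y) p.2} := by
    rw [sum_segx]; ext ⟨x, y⟩
    simp only [Set.mem_setOf_eq]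
    constructor
    · rintro ⟨a, b, c, d⟩; exact ⟨a, b, c, by linarith⟩
    · rintro ⟨a, b, c, d⟩; exact ⟨a, b, c, by linarith⟩
  rw [heq, vol_slab_y 0 1 (by norm_num) _ _ continuous_const (by continuity)
    (fun x hx => by simpa using by linarith [hx.2])]
  rw [show (fun x : ℝ => (2 : ℝ) - x - (fun _ : ℝ => (0:ℝ)) x) = fun x : ℝ => (2 : ℝ) - x by
    funext x; simp]
  rw [integral_const_sub]
  rw [show ((1 - 0) * 2 - ((1:ℝ) ^ 2 - 0 ^ 2) / 2 : ℝ) = 3 / 2 by norm_num]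
  exact ofReal_3half

lemma vol_sum_segy : volume (Δ₁ + convexHull ℝ {((0 : ℝ), (0 : ℝ)), ((0 : ℝ), (1 : ℝ))})
    = 3 / 2 := by
  have heq : Δ₁ + convexHull ℝ {((0 : ℝ), (0 : ℝ)), ((0 : ℝ), (1 : ℝ))}
      = {p : ℝ × ℝ | 0 ≤ p.1 ∧ p.1 ≤ 1 ∧ (fun _ : ℝ => (0 : ℝ)) p.1 ≤ p.2 ∧
          p.2 ≤ (fun x : ℝ => 2 - x) p.1} := by
    rw [sum_segy]; ext ⟨x, y⟩
    simp only [Set.mem_setOf_eq]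
    constructor
    · rintro ⟨a, b, c, d⟩; exact ⟨a, b, c, by linarith⟩
    · rintro ⟨a, b, c, d⟩; exact ⟨a, b, c, by linarith⟩
  rw [heq, vol_slab_x 0 1 (by norm_num) _ _ continuous_const (by continuity)
    (fun x hx => by simpa using by linarith [hx.2])]
  rw [show (fun x : ℝ => (2 : ℝ) - x - (fun _ : ℝ => (0:ℝ)) x) = fun x : ℝ => (2 : ℝ) - x by
    funext x; simp]
  rw [integral_const_sub]
  rw [show ((1 - 0) * 2 - ((1:ℝ) ^ 2 - 0 ^ 2) / 2 : ℝ) = 3 / 2 by norm_num]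
  exact ofReal_3half

lemma vol_sum_segd : volume (Δ₁ + convexHull ℝ {((1 : ℝ), (0 : ℝ)), ((0 : ℝ), (1 : ℝ))})
    = 3 / 2 := by
  set S := Δ₁ + convexHull ℝ {((1 : ℝ), (0 : ℝ)), ((0 : ℝ), (1 : ℝ))} with hS
  set B := {p : ℝ × ℝ | 0 ≤ p.1 ∧ p.1 ≤ 2 ∧ (fun _ : ℝ => (0 : ℝ)) p.1 ≤ p.2 ∧
      p.2 ≤ (fun x : ℝ => 2 - x) p.1} with hB
  set C := {p : ℝ × ℝ | 0 ≤ p.1 ∧ p.1 ≤ 1 ∧ (fun _ : ℝ => (0 : ℝ)) p.1 ≤ p.2 ∧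
      p.2 < 1 - p.1} with hC
  have hBC : S = B \ C := by
    rw [hS, sum_segd, hB, hC]
    ext ⟨x, y⟩
    simp only [Set.mem_setOf_eq, Set.mem_diff]
    constructor
    · rintro ⟨a, b, c, d⟩
      refine ⟨⟨a, by linarith, by first | exact b | simpa using b,
        by first | linarith | simpa using by linarith⟩, ?_⟩
      rintro ⟨-, -, -, hlt⟩
      try simp only [Set.mem_setOf_eq] at hlt
      linarith
    · rintro ⟨⟨a, b, c, d⟩, hn⟩
      try simp only [Set.mem_setOf_eq] at c d
      refine ⟨a, c, ?_, by linarith⟩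
      by_contra hcon
      push_neg at hcon
      exact hn ⟨a, by linarith, c, by linarith⟩
  have hCB : C ⊆ B := by
    rintro ⟨x, y⟩ ⟨a, b, c, d⟩
    try simp only [Set.mem_setOf_eq] at c d
    exact ⟨a, by linarith, c, by first | linarith | simpa using by linarith⟩
  have hCmeas : MeasurableSet C := by
    apply MeasurableSet.inter (measurableSet_le measurable_const measurable_fst)
    apply MeasurableSet.inter (measurableSet_le measurable_fst measurable_const)
    exact MeasurableSet.inter
      (measurableSet_le measurable_const measurable_snd)
      (measurableSet_lt measurable_snd ((continuous_const.sub continuous_fst).measurable))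
  have hBvol : volume B = ENNReal.ofReal 2 := by
    rw [hB, vol_slab_x 0 2 (by norm_num) _ _ continuous_const (by continuity)
      (fun x hx => by simpa using by linarith [hx.2])]
    rw [show (fun x : ℝ => (2 : ℝ) - x - (fun _ : ℝ => (0:ℝ)) x) = fun x : ℝ => (2 : ℝ) - x by
      funext x; simp]
    rw [integral_const_sub]
    norm_num
  have hCvol : volume C = ENNReal.ofReal (1 / 2) := by
    have hCc : volume {p : ℝ × ℝ | 0 ≤ p.1 ∧ p.1 ≤ 1 ∧ (fun _ : ℝ => (0 : ℝ)) p.1 ≤ p.2 ∧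
        p.2 ≤ (fun x : ℝ => 1 - x) p.1} = ENNReal.ofReal (1 / 2) := by
      rw [vol_slab_x 0 1 (by norm_num) _ _ continuous_const (by continuity)
        (fun x hx => by simpa using by linarith [hx.2])]
      rw [show (fun x : ℝ => (1 : ℝ) - x - (fun _ : ℝ => (0:ℝ)) x) = fun x : ℝ => (1 : ℝ) - x by
        funext x; simp]
      rw [integral_const_sub]
      norm_num
    apply le_antisymm
    · rw [← hCc]
      apply measure_mono
      rintro ⟨x, y⟩ ⟨a, b, c, d⟩
      try simp only [Set.mem_setOf_eq] at c d
      exact ⟨a, b, c, by first | linarith | simpa using by linarith⟩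
    · calc ENNReal.ofReal (1 / 2)
          = volume {p : ℝ × ℝ | 0 ≤ p.1 ∧ p.1 ≤ 1 ∧ (fun _ : ℝ => (0 : ℝ)) p.1 ≤ p.2 ∧
              p.2 ≤ (fun x : ℝ => 1 - x) p.1} := hCc.symm
        _ ≤ volume (C ∪ {p : ℝ × ℝ | p.1 + p.2 = 1}) := by
            apply measure_mono
            rintro ⟨x, y⟩ ⟨a, b, c, d⟩
            try simp only [Set.mem_setOf_eq] at c d
            rcases lt_or_eq_of_le d with hlt | heq
            · exact Or.inl ⟨a, b, c, by simpa using hlt⟩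
            · exact Or.inr (by simp only [Set.mem_setOf_eq]; linarith)
        _ ≤ volume C + volume {p : ℝ × ℝ | p.1 + p.2 = 1} := measure_union_le _ _
        _ = volume C := by rw [antidiag_null, add_zero]
  have hBSC : B = S ∪ C := by rw [hBC, Set.diff_union_of_subset hCB]
  have hdisj : Disjoint S C := by rw [hBC]; exact Set.disjoint_sdiff_left
  have hadd : volume S + volume C = volume B := by rw [hBSC, measure_union hdisj hCmeas]
  have : volume S = volume B - volume C :=
    ENNReal.eq_sub_of_add_eq (by rw [hCvol]; exact ENNReal.ofReal_ne_top) hadd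
  rw [this, hBvol, hCvol, ← ENNReal.ofReal_sub _ (by norm_num : (0:ℝ) ≤ 1/2),
    show (2 - 1 / 2 : ℝ) = 3 / 2 by norm_num]
  exact ofReal_3half

lemma compact_hull_fin (s : Set (ℝ × ℝ)) (hs : s.Finite) : IsCompact (convexHull ℝ s) :=
  hs.isCompact_convexHull ℝ

lemma meas_vadd_d1 (v : ℝ × ℝ) : MeasurableSet (v +ᵥ Δ₁) := by
  have h1 : v +ᵥ Δ₁ = (fun x => v + x) '' Δ₁ := by
    ext p; simp only [Set.mem_vadd_set, vadd_eq_add, Set.mem_image]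
  rw [h1]
  exact (((Set.toFinite _).isCompact_convexHull ℝ).image
    (continuous_const.add continuous_id)).isClosed.measurableSet

lemma vol_vadd_d1 (v : ℝ × ℝ) : volume (v +ᵥ Δ₁) = ENNReal.ofReal (1 / 2) := by
  rw [measure_vadd, vol_d1]

lemma lemV_y (P Q : ℝ × ℝ) (hPQ : P.2 + 2 ≤ Q.2) :
    (5 / 2 : ℝ≥0∞) ≤ volume (Δ₁ + segment ℝ P Q) := by
  have hQP : (0 : ℝ) < Q.2 - P.2 := by linarith
  set L : ℝ → ℝ := fun y => P.1 + (y - P.2) * (Q.1 - P.1) / (Q.2 - P.2) with hL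
  have hLcont : Continuous L := by
    apply continuous_const.add
    exact (((continuous_id.sub continuous_const).mul continuous_const).div_const _)
  set Par := {p : ℝ × ℝ | P.2 ≤ p.2 ∧ p.2 ≤ Q.2 ∧ L p.2 ≤ p.1 ∧ p.1 ≤ L p.2 + 1} with hParDef
  have hPar : Par ⊆ Δ₁ + segment ℝ P Q := by
    rintro ⟨x, y⟩ ⟨h1, h2', h3, h4⟩
    rw [Set.mem_add]
    set t := (y - P.2) / (Q.2 - P.2) with htdef
    have ht0 : 0 ≤ t := div_nonneg (by linarith) hQP.le
    have ht1 : t ≤ 1 := by rw [htdef, div_le_one hQP]; linarith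
    have hc1 : ((1 - t) • P + t • Q).1 = L y := by
      simp only [Prod.fst_add, Prod.smul_fst, smul_eq_mul, hL, htdef]
      field_simp
      ring
    have hc2 : ((1 - t) • P + t • Q).2 = y := by
      simp only [Prod.snd_add, Prod.smul_snd, smul_eq_mul, htdef]
      field_simp
      ring
    refine ⟨(x - L y, 0), ?_, (1 - t) • P + t • Q,
      ⟨1 - t, t, by linarith, ht0, by ring, rfl⟩, ?_⟩
    · rw [tri_eq]
      refine ⟨by simp only; linarith, le_refl _, by simp only; linarith⟩
    · rw [Prod.ext_iff, Prod.fst_add, Prod.snd_add, hc1, hc2]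
      constructor <;> simp
  have hv := vol_slab_y P.2 Q.2 (by linarith) L (fun y => L y + 1) hLcont
    (by exact hLcont.add continuous_const) (fun y _ => by simp)
  have hParVol : volume Par = ENNReal.ofReal (Q.2 - P.2) := by
    rw [show volume Par = ENNReal.ofReal (∫ x in P.2..Q.2, ((fun y => L y + 1) x - L x)) from hv]
    rw [show (fun x : ℝ => ((fun y => L y + 1) x - L x)) = fun _ : ℝ => (1 : ℝ) by
      funext x; simp]
    rw [intervalIntegral.integral_const, smul_eq_mul, mul_one]
  set Tri := Q +ᵥ Δ₁ with hTriDef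
  have hTriSub : Tri ⊆ Δ₁ + segment ℝ P Q := by
    intro p hp
    rw [Set.mem_vadd_set] at hp
    obtain ⟨δ, hδ, rfl⟩ := hp
    rw [Set.mem_add]
    exact ⟨δ, hδ, Q, right_mem_segment ℝ P Q, by rw [vadd_eq_add]; abel⟩
  set TriS := Tri ∩ {p : ℝ × ℝ | Q.2 < p.2} with hTriSDef
  have hTriSMeas : MeasurableSet TriS :=
    (meas_vadd_d1 Q).inter (measurableSet_lt measurable_const measurable_snd)
  have hTriSvol : ENNReal.ofReal (1 / 2) ≤ volume TriS := by
    have hcover : Tri ⊆ TriS ∪ {p : ℝ × ℝ | p.2 = Q.2} := by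
      intro p hp
      have hp' := hp
      rw [Set.mem_vadd_set] at hp'
      obtain ⟨δ, hδ, rfl⟩ := hp'
      rw [tri_eq] at hδ
      rcases lt_or_eq_of_le hδ.2.1 with hgt | heq0
      · left
        refine ⟨hp, ?_⟩
        simp only [Set.mem_setOf_eq, vadd_eq_add, Prod.snd_add]
        linarith
      · right
        simp only [Set.mem_setOf_eq, vadd_eq_add, Prod.snd_add]
        linarith
    calc ENNReal.ofReal (1 / 2) = volume Tri := (vol_vadd_d1 Q).symm
      _ ≤ volume (TriS ∪ {p : ℝ × ℝ | p.2 = Q.2}) := measure_mono hcover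
      _ ≤ volume TriS + volume {p : ℝ × ℝ | p.2 = Q.2} := measure_union_le _ _
      _ = volume TriS := by rw [horiz_null, add_zero]
  have hdisj : Disjoint Par TriS := by
    rw [Set.disjoint_left]
    rintro p ⟨-, hle, -, -⟩ ⟨-, hgt⟩
    simp only [Set.mem_setOf_eq] at hgt
    linarith
  calc (5 / 2 : ℝ≥0∞) = ENNReal.ofReal (5 / 2) := ofReal_5half.symm
    _ ≤ ENNReal.ofReal (Q.2 - P.2) + ENNReal.ofReal (1 / 2) := by
        rw [← ENNReal.ofReal_add (by linarith) (by norm_num)]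
        exact ENNReal.ofReal_le_ofReal (by linarith)
    _ ≤ volume Par + volume TriS := add_le_add (le_of_eq hParVol.symm) hTriSvol
    _ = volume (Par ∪ TriS) := (measure_union hdisj hTriSMeas).symm
    _ ≤ volume (Δ₁ + segment ℝ P Q) :=
        measure_mono (Set.union_subset hPar (Set.Subset.trans Set.inter_subset_left hTriSub))

lemma lemV_x (P Q : ℝ × ℝ) (hPQ : P.1 + 2 ≤ Q.1) :
    (5 / 2 : ℝ≥0∞) ≤ volume (Δ₁ + segment ℝ P Q) := by
  have hQP : (0 : ℝ) < Q.1 - P.1 := by linarith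
  set L : ℝ → ℝ := fun x => P.2 + (x - P.1) * (Q.2 - P.2) / (Q.1 - P.1) with hL
  have hLcont : Continuous L := by
    apply continuous_const.add
    exact (((continuous_id.sub continuous_const).mul continuous_const).div_const _)
  set Par := {p : ℝ × ℝ | P.1 ≤ p.1 ∧ p.1 ≤ Q.1 ∧ L p.1 ≤ p.2 ∧ p.2 ≤ L p.1 + 1} with hParDef
  have hPar : Par ⊆ Δ₁ + segment ℝ P Q := by
    rintro ⟨x, y⟩ ⟨h1, h2', h3, h4⟩
    rw [Set.mem_add]
    set t := (x - P.1) / (Q.1 - P.1) with htdef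
    have ht0 : 0 ≤ t := div_nonneg (by linarith) hQP.le
    have ht1 : t ≤ 1 := by rw [htdef, div_le_one hQP]; linarith
    have hc1 : ((1 - t) • P + t • Q).1 = x := by
      simp only [Prod.fst_add, Prod.smul_fst, smul_eq_mul, htdef]
      field_simp
      ring
    have hc2 : ((1 - t) • P + t • Q).2 = L x := by
      simp only [Prod.snd_add, Prod.smul_snd, smul_eq_mul, hL, htdef]
      field_simp
      ring
    refine ⟨(0, y - L x), ?_, (1 - t) • P + t • Q,
      ⟨1 - t, t, by linarith, ht0, by ring, rfl⟩, ?_⟩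
    · rw [tri_eq]
      refine ⟨le_refl _, by simp only; linarith, by simp only; linarith⟩
    · rw [Prod.ext_iff, Prod.fst_add, Prod.snd_add, hc1, hc2]
      constructor <;> simp
  have hv := vol_slab_x P.1 Q.1 (by linarith) L (fun x => L x + 1) hLcont
    (by exact hLcont.add continuous_const) (fun y _ => by simp)
  have hParVol : volume Par = ENNReal.ofReal (Q.1 - P.1) := by
    rw [show volume Par = ENNReal.ofReal (∫ x in P.1..Q.1, ((fun y => L y + 1) x - L x)) from hv]
    rw [show (fun x : ℝ => ((fun y => L y + 1) x - L x)) = fun _ : ℝ => (1 : ℝ) by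
      funext x; simp]
    rw [intervalIntegral.integral_const, smul_eq_mul, mul_one]
  set Tri := Q +ᵥ Δ₁ with hTriDef
  have hTriSub : Tri ⊆ Δ₁ + segment ℝ P Q := by
    intro p hp
    rw [Set.mem_vadd_set] at hp
    obtain ⟨δ, hδ, rfl⟩ := hp
    rw [Set.mem_add]
    exact ⟨δ, hδ, Q, right_mem_segment ℝ P Q, by rw [vadd_eq_add]; abel⟩
  set TriS := Tri ∩ {p : ℝ × ℝ | Q.1 < p.1} with hTriSDef
  have hTriSMeas : MeasurableSet TriS :=
    (meas_vadd_d1 Q).inter (measurableSet_lt measurable_const measurable_fst)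
  have hTriSvol : ENNReal.ofReal (1 / 2) ≤ volume TriS := by
    have hcover : Tri ⊆ TriS ∪ {p : ℝ × ℝ | p.1 = Q.1} := by
      intro p hp
      have hp' := hp
      rw [Set.mem_vadd_set] at hp'
      obtain ⟨δ, hδ, rfl⟩ := hp'
      rw [tri_eq] at hδ
      rcases lt_or_eq_of_le hδ.1 with hgt | heq0
      · left
        refine ⟨hp, ?_⟩
        simp only [Set.mem_setOf_eq, vadd_eq_add, Prod.fst_add]
        linarith
      · right
        simp only [Set.mem_setOf_eq, vadd_eq_add, Prod.fst_add]
        linarith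
    calc ENNReal.ofReal (1 / 2) = volume Tri := (vol_vadd_d1 Q).symm
      _ ≤ volume (TriS ∪ {p : ℝ × ℝ | p.1 = Q.1}) := measure_mono hcover
      _ ≤ volume TriS + volume {p : ℝ × ℝ | p.1 = Q.1} := measure_union_le _ _
      _ = volume TriS := by rw [vert_null, add_zero]
  have hdisj : Disjoint Par TriS := by
    rw [Set.disjoint_left]
    rintro p ⟨-, hle, -, -⟩ ⟨-, hgt⟩
    simp only [Set.mem_setOf_eq] at hgt
    linarith
  calc (5 / 2 : ℝ≥0∞) = ENNReal.ofReal (5 / 2) := ofReal_5half.symm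
    _ ≤ ENNReal.ofReal (Q.1 - P.1) + ENNReal.ofReal (1 / 2) := by
        rw [← ENNReal.ofReal_add (by linarith) (by norm_num)]
        exact ENNReal.ofReal_le_ofReal (by linarith)
    _ ≤ volume Par + volume TriS := add_le_add (le_of_eq hParVol.symm) hTriSvol
    _ = volume (Par ∪ TriS) := (measure_union hdisj hTriSMeas).symm
    _ ≤ volume (Δ₁ + segment ℝ P Q) :=
        measure_mono (Set.union_subset hPar (Set.Subset.trans Set.inter_subset_left hTriSub))

lemma zero_mem_d1 : ((0 : ℝ), (0 : ℝ)) ∈ Δ₁ := by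
  rw [tri_eq]; exact ⟨le_refl _, le_refl _, by norm_num⟩

lemma lemV_diag_core : (5 / 2 : ℝ≥0∞) ≤ volume (Δ₁ + segment ℝ (0, 0) ((1 : ℝ), (1 : ℝ))) := by
  set S := Δ₁ + segment ℝ ((0 : ℝ), (0 : ℝ)) ((1 : ℝ), (1 : ℝ)) with hSdef
  set A1 := {p : ℝ × ℝ | 0 ≤ p.1 ∧ p.1 ≤ 1 ∧ p.1 ≤ p.2 ∧ p.2 ≤ p.1 + 1} with hA1
  set A2 := {p : ℝ × ℝ | 0 ≤ p.2 ∧ p.2 ≤ 1 ∧ p.2 ≤ p.1 ∧ p.1 ≤ p.2 + 1} with hA2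
  set A3 := ((1 : ℝ), (1 : ℝ)) +ᵥ Δ₁ with hA3
  have hseg : ∀ t : ℝ, 0 ≤ t → t ≤ 1 →
      ((t, t) : ℝ × ℝ) ∈ segment ℝ ((0 : ℝ), (0 : ℝ)) ((1 : ℝ), (1 : ℝ)) := by
    intro t h0 h1
    refine ⟨1 - t, t, by linarith, h0, by ring, ?_⟩
    simp only [Prod.smul_mk, Prod.mk_add_mk, smul_eq_mul, Prod.mk.injEq]
    constructor <;> ring
  have hA1S : A1 ⊆ S := by
    rintro ⟨x, y⟩ ⟨h1, h2, h3, h4⟩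
    try simp only [Set.mem_setOf_eq] at h3 h4
    rw [hSdef, Set.mem_add]
    refine ⟨(0, y - x), ?_, (x, x), hseg x h1 h2, ?_⟩
    · rw [tri_eq]; exact ⟨le_refl _, by first | linarith | (simp only [Set.mem_setOf_eq]; linarith) | (simp; linarith), by first | linarith | (simp only [Set.mem_setOf_eq]; linarith) | (simp; linarith)⟩
    · simp only [Prod.mk_add_mk, Prod.mk.injEq]; constructor <;> ring
  have hA2S : A2 ⊆ S := by
    rintro ⟨x, y⟩ ⟨h1, h2, h3, h4⟩
    try simp only [Set.mem_setOf_eq] at h3 h4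
    rw [hSdef, Set.mem_add]
    refine ⟨(x - y, 0), ?_, (y, y), hseg y h1 h2, ?_⟩
    · rw [tri_eq]; exact ⟨by first | linarith | (simp only [Set.mem_setOf_eq]; linarith) | (simp; linarith), le_refl _, by first | linarith | (simp only [Set.mem_setOf_eq]; linarith) | (simp; linarith)⟩
    · simp only [Prod.mk_add_mk, Prod.mk.injEq]; constructor <;> ring
  have hA3S : A3 ⊆ S := by
    intro p hp
    rw [hA3, Set.mem_vadd_set] at hp
    obtain ⟨δ, hδ, rfl⟩ := hp
    rw [hSdef, Set.mem_add]
    exact ⟨δ, hδ, (1, 1), right_mem_segment ℝ _ _, by rw [vadd_eq_add]; abel⟩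
  set B1 := A1 ∩ {p : ℝ × ℝ | p.1 < p.2} with hB1
  set B2 := A2 ∩ {p : ℝ × ℝ | p.2 < p.1} with hB2
  set B3 := (A3 ∩ {p : ℝ × ℝ | 1 < p.1}) ∩ {p : ℝ × ℝ | 1 < p.2} with hB3
  have hmA1 : MeasurableSet A1 := meas_slab_x 0 1 (fun x => x) (fun x => x + 1)
    continuous_id' (by continuity)
  have hmA2 : MeasurableSet A2 := meas_slab_y 0 1 (fun x => x) (fun x => x + 1)
    continuous_id' (by continuity)
  have hmB1 : MeasurableSet B1 := hmA1.inter (measurableSet_lt measurable_fst measurable_snd)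
  have hmB2 : MeasurableSet B2 := hmA2.inter (measurableSet_lt measurable_snd measurable_fst)
  have hmB3 : MeasurableSet B3 :=
    ((meas_vadd_d1 _).inter (measurableSet_lt measurable_const measurable_fst)).inter
      (measurableSet_lt measurable_const measurable_snd)
  have hvA1 : volume A1 = ENNReal.ofReal 1 := by
    rw [hA1, vol_slab_x 0 1 (by norm_num) (fun x => x) (fun x => x + 1) continuous_id'
      (by continuity) (fun x _ => by show x ≤ x + 1; linarith)]
    norm_num
  have hvA2 : volume A2 = ENNReal.ofReal 1 := by
    rw [hA2, vol_slab_y 0 1 (by norm_num) (fun x => x) (fun x => x + 1) continuous_id'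
      (by continuity) (fun x _ => by show x ≤ x + 1; linarith)]
    norm_num
  have hvB1 : ENNReal.ofReal 1 ≤ volume B1 := by
    have hcov : A1 ⊆ B1 ∪ {p : ℝ × ℝ | p.2 = p.1} := by
      rintro ⟨x, y⟩ hp
      have h3 := hp.2.2.1
      try simp only [Set.mem_setOf_eq] at h3
      rcases lt_or_eq_of_le h3 with hlt | heq
      · exact Or.inl ⟨hp, hlt⟩
      · exact Or.inr heq.symm
    calc ENNReal.ofReal 1 = volume A1 := hvA1.symm
      _ ≤ volume (B1 ∪ {p : ℝ × ℝ | p.2 = p.1}) := measure_mono hcov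
      _ ≤ volume B1 + volume {p : ℝ × ℝ | p.2 = p.1} := measure_union_le _ _
      _ = volume B1 := by rw [diag_null, add_zero]
  have hvB2 : ENNReal.ofReal 1 ≤ volume B2 := by
    have hcov : A2 ⊆ B2 ∪ {p : ℝ × ℝ | p.2 = p.1} := by
      rintro ⟨x, y⟩ hp
      have h3 := hp.2.2.1
      try simp only [Set.mem_setOf_eq] at h3
      rcases lt_or_eq_of_le h3 with hlt | heq
      · exact Or.inl ⟨hp, hlt⟩
      · exact Or.inr heq
    calc ENNReal.ofReal 1 = volume A2 := hvA2.symm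
      _ ≤ volume (B2 ∪ {p : ℝ × ℝ | p.2 = p.1}) := measure_mono hcov
      _ ≤ volume B2 + volume {p : ℝ × ℝ | p.2 = p.1} := measure_union_le _ _
      _ = volume B2 := by rw [diag_null, add_zero]
  have hvB3 : ENNReal.ofReal (1 / 2) ≤ volume B3 := by
    have hcov : A3 ⊆ B3 ∪ ({p : ℝ × ℝ | p.1 = 1} ∪ {p : ℝ × ℝ | p.2 = 1}) := by
      intro p hp
      have hp' := hp
      rw [hA3, Set.mem_vadd_set] at hp'
      obtain ⟨δ, hδ, rfl⟩ := hp'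
      rw [tri_eq] at hδ
      obtain ⟨hd1, hd2, hd3⟩ := hδ
      rcases lt_or_eq_of_le hd1 with hgt1 | heq1
      · rcases lt_or_eq_of_le hd2 with hgt2 | heq2
        · left
          refine ⟨⟨hp, ?_⟩, ?_⟩ <;>
            simp only [Set.mem_setOf_eq, vadd_eq_add, Prod.fst_add, Prod.snd_add] <;> linarith
        · right; right
          simp only [Set.mem_setOf_eq, vadd_eq_add, Prod.snd_add]
          linarith
      · right; left
        simp only [Set.mem_setOf_eq, vadd_eq_add, Prod.fst_add]
        linarith
    calc ENNReal.ofReal (1 / 2) = volume A3 := (vol_vadd_d1 _).symm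
      _ ≤ volume (B3 ∪ ({p : ℝ × ℝ | p.1 = 1} ∪ {p : ℝ × ℝ | p.2 = 1})) := measure_mono hcov
      _ ≤ volume B3 + volume ({p : ℝ × ℝ | p.1 = 1} ∪ {p : ℝ × ℝ | p.2 = 1}) :=
          measure_union_le _ _
      _ ≤ volume B3 + (volume {p : ℝ × ℝ | p.1 = 1} + volume {p : ℝ × ℝ | p.2 = 1}) :=
          add_le_add_right (measure_union_le _ _) _
      _ = volume B3 := by rw [vert_null, horiz_null, add_zero, add_zero]
  have hd12 : Disjoint B1 B2 := by
    rw [Set.disjoint_left]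
    rintro p ⟨-, hlt1⟩ ⟨-, hlt2⟩
    try simp only [Set.mem_setOf_eq] at hlt1 hlt2
    linarith
  have hd123 : Disjoint (B1 ∪ B2) B3 := by
    rw [Set.disjoint_left]
    rintro p (⟨hA, -⟩ | ⟨hA, -⟩) ⟨⟨-, hx⟩, hy⟩
    · have h1 : (1 : ℝ) < p.1 := hx
      have h2 : p.1 ≤ 1 := hA.2.1
      linarith
    · have h1 : (1 : ℝ) < p.2 := hy
      have h2 : p.2 ≤ 1 := hA.2.1
      linarith
  calc (5 / 2 : ℝ≥0∞) = ENNReal.ofReal (5 / 2) := ofReal_5half.symm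
    _ ≤ ENNReal.ofReal 1 + ENNReal.ofReal 1 + ENNReal.ofReal (1 / 2) := by
        rw [← ENNReal.ofReal_add (by norm_num) (by norm_num),
          ← ENNReal.ofReal_add (by norm_num) (by norm_num)]
        exact ENNReal.ofReal_le_ofReal (by norm_num)
    _ ≤ volume B1 + volume B2 + volume B3 :=
        add_le_add (add_le_add hvB1 hvB2) hvB3
    _ = volume (B1 ∪ B2) + volume B3 := by rw [measure_union hd12 hmB2]
    _ = volume ((B1 ∪ B2) ∪ B3) := (measure_union hd123 hmB3).symm
    _ ≤ volume S := by
        apply measure_mono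
        apply Set.union_subset (Set.union_subset ?_ ?_) ?_
        · exact Set.Subset.trans Set.inter_subset_left hA1S
        · exact Set.Subset.trans Set.inter_subset_left hA2S
        · exact Set.Subset.trans (Set.Subset.trans Set.inter_subset_left Set.inter_subset_left) hA3S

lemma lemV_diag (P : ℝ × ℝ) :
    (5 / 2 : ℝ≥0∞) ≤ volume (Δ₁ + segment ℝ P (P + ((1 : ℝ), (1 : ℝ)))) := by
  have hseg : segment ℝ P (P + ((1 : ℝ), (1 : ℝ)))
      = P +ᵥ segment ℝ ((0 : ℝ), (0 : ℝ)) ((1 : ℝ), (1 : ℝ)) := by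
    rw [vadd_segment]
    simp only [vadd_eq_add, Prod.mk_zero_zero, add_zero]
  rw [hseg, add_vadd_comm', measure_vadd]
  exact lemV_diag_core

lemma vol_d2 : volume Δ₂ = ENNReal.ofReal (1 / 2) := by
  have heq : Δ₂ = {p : ℝ × ℝ | 0 ≤ p.1 ∧ p.1 ≤ 1 ∧ (fun x : ℝ => 1 - x) p.1 ≤ p.2 ∧
      p.2 ≤ (fun _ : ℝ => (1 : ℝ)) p.1} := by
    rw [tri2_eq]; ext ⟨x, y⟩
    simp only [Set.mem_setOf_eq]
    constructor
    · rintro ⟨a, b, c⟩; exact ⟨by linarith, a, by first | linarith | (simp only [Set.mem_setOf_eq]; linarith) | (simp; linarith), b⟩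
    · rintro ⟨a, b, c, d⟩; try simp only [Set.mem_setOf_eq] at c d
      exact ⟨b, d, by linarith⟩
  rw [heq, vol_slab_x 0 1 (by norm_num) _ _ (by continuity) continuous_const
    (fun x hx => by have := hx.1; first | linarith | (simp only [Set.mem_setOf_eq]; linarith))]
  rw [show (fun x : ℝ => ((fun _ : ℝ => (1 : ℝ)) x - (fun x : ℝ => 1 - x) x)) = fun x : ℝ => x by
    funext x; norm_num]
  rw [integral_id]
  norm_num

lemma vol_sum_d2_ge : (5 / 2 : ℝ≥0∞) ≤ volume (Δ₁ + Δ₂) := by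
  set S := Δ₁ + Δ₂ with hSdef
  set B := (Δ₂ ∩ {p : ℝ × ℝ | p.1 < 1}) ∩ {p : ℝ × ℝ | p.2 < 1} with hB
  set C := {p : ℝ × ℝ | 1 < p.1 ∧ p.1 ≤ 2 ∧ 0 ≤ p.2 ∧ p.2 < 1} with hC
  set D := {p : ℝ × ℝ | 0 ≤ p.1 ∧ p.1 < 1 ∧ 1 < p.2 ∧ p.2 ≤ 2} with hD
  have hBS : B ⊆ S := by
    intro p hp
    rw [hSdef, Set.mem_add]
    exact ⟨(0, 0), zero_mem_d1, p, hp.1.1, by simp⟩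
  have hCS : C ⊆ S := by
    rintro ⟨x, y⟩ ⟨h1, h2, h3, h4⟩
    rw [hSdef, Set.mem_add]
    refine ⟨(x - 1, 0), ?_, (1, y), ?_, ?_⟩
    · rw [tri_eq]; exact ⟨by first | linarith | (simp only [Set.mem_setOf_eq]; linarith) | (simp; linarith), le_refl _, by first | linarith | (simp only [Set.mem_setOf_eq]; linarith) | (simp; linarith)⟩
    · rw [tri2_eq]; exact ⟨le_refl _, by first | linarith | (simp only [Set.mem_setOf_eq]; linarith) | (simp; linarith), by first | linarith | (simp only [Set.mem_setOf_eq]; linarith) | (simp; linarith)⟩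
    · simp only [Prod.mk_add_mk, Prod.mk.injEq]; constructor <;> ring
  have hDS : D ⊆ S := by
    rintro ⟨x, y⟩ ⟨h1, h2, h3, h4⟩
    rw [hSdef, Set.mem_add]
    refine ⟨(0, y - 1), ?_, (x, 1), ?_, ?_⟩
    · rw [tri_eq]; exact ⟨le_refl _, by first | linarith | (simp only [Set.mem_setOf_eq]; linarith) | (simp; linarith), by first | linarith | (simp only [Set.mem_setOf_eq]; linarith) | (simp; linarith)⟩
    · rw [tri2_eq]; exact ⟨by first | linarith | (simp only [Set.mem_setOf_eq]; linarith) | (simp; linarith), le_refl _, by first | linarith | (simp only [Set.mem_setOf_eq]; linarith) | (simp; linarith)⟩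
    · simp only [Prod.mk_add_mk, Prod.mk.injEq]; constructor <;> ring
  have hmB : MeasurableSet B :=
    (meas_d2.inter (measurableSet_lt measurable_fst measurable_const)).inter
      (measurableSet_lt measurable_snd measurable_const)
  have hmC : MeasurableSet C := by
    apply MeasurableSet.inter (measurableSet_lt measurable_const measurable_fst)
    apply MeasurableSet.inter (measurableSet_le measurable_fst measurable_const)
    exact MeasurableSet.inter (measurableSet_le measurable_const measurable_snd)
      (measurableSet_lt measurable_snd measurable_const)
  have hmD : MeasurableSet D := by
    apply MeasurableSet.inter (measurableSet_le measurable_const measurable_fst)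
    apply MeasurableSet.inter (measurableSet_lt measurable_fst measurable_const)
    exact MeasurableSet.inter (measurableSet_lt measurable_const measurable_snd)
      (measurableSet_le measurable_snd measurable_const)
  have hvB : ENNReal.ofReal (1 / 2) ≤ volume B := by
    have hcov : Δ₂ ⊆ B ∪ ({p : ℝ × ℝ | p.1 = 1} ∪ {p : ℝ × ℝ | p.2 = 1}) := by
      intro p hp
      have hp' := hp
      rw [tri2_eq] at hp'
      obtain ⟨h1, h2, h3⟩ := hp'
      rcases lt_or_eq_of_le h1 with hx | hx
      · rcases lt_or_eq_of_le h2 with hy | hy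
        · exact Or.inl ⟨⟨hp, hx⟩, hy⟩
        · exact Or.inr (Or.inr hy)
      · exact Or.inr (Or.inl hx)
    calc ENNReal.ofReal (1 / 2) = volume Δ₂ := vol_d2.symm
      _ ≤ volume (B ∪ ({p : ℝ × ℝ | p.1 = 1} ∪ {p : ℝ × ℝ | p.2 = 1})) := measure_mono hcov
      _ ≤ volume B + volume ({p : ℝ × ℝ | p.1 = 1} ∪ {p : ℝ × ℝ | p.2 = 1}) :=
          measure_union_le _ _
      _ ≤ volume B + (volume {p : ℝ × ℝ | p.1 = 1} + volume {p : ℝ × ℝ | p.2 = 1}) :=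
          add_le_add_right (measure_union_le _ _) _
      _ = volume B := by rw [vert_null, horiz_null, add_zero, add_zero]
  have hvC : ENNReal.ofReal 1 ≤ volume C := by
    have hCcl : volume {p : ℝ × ℝ | 1 ≤ p.1 ∧ p.1 ≤ 2 ∧ (fun _ : ℝ => (0 : ℝ)) p.1 ≤ p.2 ∧
        p.2 ≤ (fun _ : ℝ => (1 : ℝ)) p.1} = ENNReal.ofReal 1 := by
      rw [vol_slab_x 1 2 (by norm_num) _ _ continuous_const continuous_const
        (fun x hx => by first | norm_num | (simp; norm_num))]
      rw [show (fun x : ℝ => ((fun _ : ℝ => (1 : ℝ)) x - (fun _ : ℝ => (0 : ℝ)) x))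
        = fun _ : ℝ => (1 : ℝ) by funext x; norm_num]
      rw [intervalIntegral.integral_const, smul_eq_mul, mul_one]
      norm_num
    have hcov : {p : ℝ × ℝ | 1 ≤ p.1 ∧ p.1 ≤ 2 ∧ (fun _ : ℝ => (0 : ℝ)) p.1 ≤ p.2 ∧
        p.2 ≤ (fun _ : ℝ => (1 : ℝ)) p.1} ⊆ C ∪ ({p : ℝ × ℝ | p.1 = 1} ∪ {p : ℝ × ℝ | p.2 = 1}) := by
      rintro ⟨x, y⟩ ⟨h1, h2, h3, h4⟩
      try simp only [Set.mem_setOf_eq] at h3 h4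
      rcases lt_or_eq_of_le h1 with hx | hx
      · rcases lt_or_eq_of_le h4 with hy | hy
        · exact Or.inl ⟨hx, h2, h3, hy⟩
        · exact Or.inr (Or.inr hy)
      · exact Or.inr (Or.inl hx.symm)
    calc ENNReal.ofReal 1 = _ := hCcl.symm
      _ ≤ volume (C ∪ ({p : ℝ × ℝ | p.1 = 1} ∪ {p : ℝ × ℝ | p.2 = 1})) := measure_mono hcov
      _ ≤ volume C + volume ({p : ℝ × ℝ | p.1 = 1} ∪ {p : ℝ × ℝ | p.2 = 1}) :=
          measure_union_le _ _
      _ ≤ volume C + (volume {p : ℝ × ℝ | p.1 = 1} + volume {p : ℝ × ℝ | p.2 = 1}) :=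
          add_le_add_right (measure_union_le _ _) _
      _ = volume C := by rw [vert_null, horiz_null, add_zero, add_zero]
  have hvD : ENNReal.ofReal 1 ≤ volume D := by
    have hDcl : volume {p : ℝ × ℝ | 1 ≤ p.2 ∧ p.2 ≤ 2 ∧ (fun _ : ℝ => (0 : ℝ)) p.2 ≤ p.1 ∧
        p.1 ≤ (fun _ : ℝ => (1 : ℝ)) p.2} = ENNReal.ofReal 1 := by
      rw [vol_slab_y 1 2 (by norm_num) _ _ continuous_const continuous_const
        (fun x hx => by first | norm_num | (simp; norm_num))]
      rw [show (fun x : ℝ => ((fun _ : ℝ => (1 : ℝ)) x - (fun _ : ℝ => (0 : ℝ)) x))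
        = fun _ : ℝ => (1 : ℝ) by funext x; norm_num]
      rw [intervalIntegral.integral_const, smul_eq_mul, mul_one]
      norm_num
    have hcov : {p : ℝ × ℝ | 1 ≤ p.2 ∧ p.2 ≤ 2 ∧ (fun _ : ℝ => (0 : ℝ)) p.2 ≤ p.1 ∧
        p.1 ≤ (fun _ : ℝ => (1 : ℝ)) p.2} ⊆ D ∪ ({p : ℝ × ℝ | p.1 = 1} ∪ {p : ℝ × ℝ | p.2 = 1}) := by
      rintro ⟨x, y⟩ ⟨h1, h2, h3, h4⟩
      try simp only [Set.mem_setOf_eq] at h3 h4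
      rcases lt_or_eq_of_le h1 with hy | hy
      · rcases lt_or_eq_of_le h4 with hx | hx
        · exact Or.inl ⟨h3, hx, hy, h2⟩
        · exact Or.inr (Or.inl hx)
      · exact Or.inr (Or.inr hy.symm)
    calc ENNReal.ofReal 1 = _ := hDcl.symm
      _ ≤ volume (D ∪ ({p : ℝ × ℝ | p.1 = 1} ∪ {p : ℝ × ℝ | p.2 = 1})) := measure_mono hcov
      _ ≤ volume D + volume ({p : ℝ × ℝ | p.1 = 1} ∪ {p : ℝ × ℝ | p.2 = 1}) :=
          measure_union_le _ _
      _ ≤ volume D + (volume {p : ℝ × ℝ | p.1 = 1} + volume {p : ℝ × ℝ | p.2 = 1}) :=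
          add_le_add_right (measure_union_le _ _) _
      _ = volume D := by rw [vert_null, horiz_null, add_zero, add_zero]
  have hdBC : Disjoint B C := by
    rw [Set.disjoint_left]
    rintro p ⟨⟨-, hx⟩, -⟩ ⟨hx', -⟩
    have h1 : p.1 < 1 := hx
    have h2 : (1 : ℝ) < p.1 := hx'
    linarith
  have hdBCD : Disjoint (B ∪ C) D := by
    rw [Set.disjoint_left]
    rintro p (⟨-, hy⟩ | ⟨-, -, -, hy⟩) ⟨-, -, hy', -⟩ <;>
      · have h1 : p.2 < 1 := hy
        have h2 : (1 : ℝ) < p.2 := hy'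
        linarith
  calc (5 / 2 : ℝ≥0∞) = ENNReal.ofReal (5 / 2) := ofReal_5half.symm
    _ ≤ ENNReal.ofReal (1 / 2) + ENNReal.ofReal 1 + ENNReal.ofReal 1 := by
        rw [← ENNReal.ofReal_add (by norm_num) (by norm_num),
          ← ENNReal.ofReal_add (by norm_num) (by norm_num)]
        exact ENNReal.ofReal_le_ofReal (by norm_num)
    _ ≤ volume B + volume C + volume D := add_le_add (add_le_add hvB hvC) hvD
    _ = volume (B ∪ C) + volume D := by rw [measure_union hdBC hmC]
    _ = volume ((B ∪ C) ∪ D) := (measure_union hdBCD hmD).symm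
    _ ≤ volume S :=
        measure_mono (Set.union_subset (Set.union_subset hBS hCS) hDS)

/-- `Δ` is a translate of one of the three unit lattice segments
`conv{(0,0),(1,0)}`, `conv{(0,0),(0,1)}`, `conv{(1,0),(0,1)}`. -/
def IsUnitSegmentTranslate (Δ : Set (ℝ × ℝ)) : Prop :=
  ∃ v : ℝ × ℝ,
    Δ = v +ᵥ convexHull ℝ {((0 : ℝ), (0 : ℝ)), ((1 : ℝ), (0 : ℝ))} ∨
    Δ = v +ᵥ convexHull ℝ {((0 : ℝ), (0 : ℝ)), ((0 : ℝ), (1 : ℝ))} ∨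
    Δ = v +ᵥ convexHull ℝ {((1 : ℝ), (0 : ℝ)), ((0 : ℝ), (1 : ℝ))}

/-- The three-case lower bound for the area of `Δᵢ + Δ`. -/
def AreaTrichotomy (Δi Δ : Set (ℝ × ℝ)) : Prop :=
  (IsUnitSegmentTranslate Δ → volume (Δi + Δ) = 3 / 2) ∧
  ((∃ v : ℝ × ℝ, Δ = v +ᵥ Δi) → volume (Δi + Δ) = 2) ∧
  (¬ IsUnitSegmentTranslate Δ → ¬ (∃ v : ℝ × ℝ, Δ = v +ᵥ Δi) →
    5 / 2 ≤ volume (Δi + Δ))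

lemma vadd_pair (v x y : ℝ × ℝ) : v +ᵥ ({x, y} : Set (ℝ × ℝ)) = {v + x, v + y} := by
  ext p
  simp only [Set.mem_vadd_set, vadd_eq_add, Set.mem_insert_iff, Set.mem_singleton_iff]
  constructor
  · rintro ⟨q, (rfl | rfl), rfl⟩
    · exact Or.inl rfl
    · exact Or.inr rfl
  · rintro (rfl | rfl)
    · exact ⟨x, Or.inl rfl, rfl⟩
    · exact ⟨y, Or.inr rfl, rfl⟩

lemma vadd_triple (v x y z : ℝ × ℝ) :
    v +ᵥ ({x, y, z} : Set (ℝ × ℝ)) = {v + x, v + y, v + z} := by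
  ext p
  simp only [Set.mem_vadd_set, vadd_eq_add, Set.mem_insert_iff, Set.mem_singleton_iff]
  constructor
  · rintro ⟨q, (rfl | rfl | rfl), rfl⟩
    · exact Or.inl rfl
    · exact Or.inr (Or.inl rfl)
    · exact Or.inr (Or.inr rfl)
  · rintro (rfl | rfl | rfl)
    · exact ⟨x, Or.inl rfl, rfl⟩
    · exact ⟨y, Or.inr (Or.inl rfl), rfl⟩
    · exact ⟨z, Or.inr (Or.inr rfl), rfl⟩

lemma translate_hull2 (v x y : ℝ × ℝ) :
    convexHull ℝ {v + x, v + y} = v +ᵥ convexHull ℝ {x, y} := by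
  rw [← convexHull_vadd, vadd_pair]

lemma translate_hull3 (v x y z : ℝ × ℝ) :
    convexHull ℝ {v + x, v + y, v + z} = v +ᵥ convexHull ℝ ({x, y, z} : Set (ℝ × ℝ)) := by
  rw [← convexHull_vadd, vadd_triple]

lemma pair_congr {A B C D : ℝ × ℝ} (h1 : A = C) (h2 : B = D) :
    ({A, B} : Set (ℝ × ℝ)) = {C, D} := by rw [h1, h2]

lemma triple_congr {A B C D E F : ℝ × ℝ} (h1 : A = D) (h2 : B = E) (h3 : C = F) :
    ({A, B, C} : Set (ℝ × ℝ)) = {D, E, F} := by rw [h1, h2, h3]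

lemma set_cases {α : Type*} (V : Set α) (A B C : α) (hsub : V ⊆ {A, B, C}) (hne : V.Nonempty) :
    V = {A} ∨ V = {B} ∨ V = {C} ∨ V = {A, B} ∨ V = {A, C} ∨ V = {B, C} ∨ V = {A, B, C} := by
  have hmem : ∀ x ∈ V, x = A ∨ x = B ∨ x = C := by
    intro x hx
    have := hsub hx
    simpa only [Set.mem_insert_iff, Set.mem_singleton_iff] using this
  by_cases hA : A ∈ V <;> by_cases hB : B ∈ V <;> by_cases hC : C ∈ V
  · refine Or.inr (Or.inr (Or.inr (Or.inr (Or.inr (Or.inr ?_)))))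
    apply Set.Subset.antisymm hsub
    intro x hx
    rcases hmem A hA with _ | _ <;>
      simp only [Set.mem_insert_iff, Set.mem_singleton_iff] at hx
    all_goals rcases hx with rfl | rfl | rfl <;> assumption
  · refine Or.inr (Or.inr (Or.inr (Or.inl ?_)))
    apply Set.Subset.antisymm
    · intro x hx
      rcases hmem x hx with rfl | rfl | rfl
      · exact Or.inl rfl
      · exact Or.inr rfl
      · exact absurd hx hC
    · intro x hx
      simp only [Set.mem_insert_iff, Set.mem_singleton_iff] at hx
      rcases hx with rfl | rfl <;> assumption
  · refine Or.inr (Or.inr (Or.inr (Or.inr (Or.inl ?_))))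
    apply Set.Subset.antisymm
    · intro x hx
      rcases hmem x hx with rfl | rfl | rfl
      · exact Or.inl rfl
      · exact absurd hx hB
      · exact Or.inr rfl
    · intro x hx
      simp only [Set.mem_insert_iff, Set.mem_singleton_iff] at hx
      rcases hx with rfl | rfl <;> assumption
  · refine Or.inl ?_
    apply Set.Subset.antisymm
    · intro x hx
      rcases hmem x hx with rfl | rfl | rfl
      · exact rfl
      · exact absurd hx hB
      · exact absurd hx hC
    · intro x hx
      simp only [Set.mem_singleton_iff] at hx
      rw [hx]; exact hA
  · refine Or.inr (Or.inr (Or.inr (Or.inr (Or.inr (Or.inl ?_)))))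
    apply Set.Subset.antisymm
    · intro x hx
      rcases hmem x hx with rfl | rfl | rfl
      · exact absurd hx hA
      · exact Or.inl rfl
      · exact Or.inr rfl
    · intro x hx
      simp only [Set.mem_insert_iff, Set.mem_singleton_iff] at hx
      rcases hx with rfl | rfl <;> assumption
  · refine Or.inr (Or.inl ?_)
    apply Set.Subset.antisymm
    · intro x hx
      rcases hmem x hx with rfl | rfl | rfl
      · exact absurd hx hA
      · exact rfl
      · exact absurd hx hC
    · intro x hx
      simp only [Set.mem_singleton_iff] at hx
      rw [hx]; exact hB
  · refine Or.inr (Or.inr (Or.inl ?_))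
    apply Set.Subset.antisymm
    · intro x hx
      rcases hmem x hx with rfl | rfl | rfl
      · exact absurd hx hA
      · exact absurd hx hB
      · exact rfl
    · intro x hx
      simp only [Set.mem_singleton_iff] at hx
      rw [hx]; exact hC
  · obtain ⟨x, hx⟩ := hne
    rcases hmem x hx with rfl | rfl | rfl
    · exact absurd hx hA
    · exact absurd hx hB
    · exact absurd hx hC

theorem tri1 (T : Finset (ℤ × ℤ)) (hT : T.Nonempty) (Δ : Set (ℝ × ℝ))
    (hΔ : Δ = convexHull ℝ ((fun p : ℤ × ℤ => ((p.1 : ℝ), (p.2 : ℝ))) '' (T : Set (ℤ × ℤ))))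
    (hpt : ¬ ∃ p, Δ = {p}) : AreaTrichotomy Δ₁ Δ := by
  refine ⟨?_, ?_, ?_⟩
  · rintro ⟨v, hv | hv | hv⟩ <;> rw [hv, add_vadd_comm', measure_vadd]
    · exact vol_sum_segx
    · exact vol_sum_segy
    · exact vol_sum_segd
  · rintro ⟨v, hv⟩
    rw [hv, add_vadd_comm', measure_vadd]
    exact vol_sum_tri
  · intro h1 h2
    by_cases hE : ∀ p ∈ T, ∀ q ∈ T,
        q.1 - p.1 ≤ 1 ∧ q.2 - p.2 ≤ 1 ∧ q.1 + q.2 - (p.1 + p.2) ≤ 1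
    · -- all pairwise differences small: enumeration
      obtain ⟨a0, ha0T, ha0⟩ : ∃ t ∈ T, t.1 = (T.image Prod.fst).min' (hT.image _) := by
        have h := Finset.min'_mem (T.image Prod.fst) (hT.image _)
        rw [Finset.mem_image] at h
        obtain ⟨t, ht, hteq⟩ := h
        exact ⟨t, ht, hteq⟩
      obtain ⟨b0, hb0T, hb0⟩ : ∃ t ∈ T, t.2 = (T.image Prod.snd).min' (hT.image _) := by
        have h := Finset.min'_mem (T.image Prod.snd) (hT.image _)
        rw [Finset.mem_image] at h
        obtain ⟨t, ht, hteq⟩ := h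
        exact ⟨t, ht, hteq⟩
      set a := (T.image Prod.fst).min' (hT.image _) with ha
      set b := (T.image Prod.snd).min' (hT.image _) with hb
      have hax : ∀ t ∈ T, a ≤ t.1 := fun t ht =>
        Finset.min'_le _ _ (Finset.mem_image_of_mem _ ht)
      have hbx : ∀ t ∈ T, b ≤ t.2 := fun t ht =>
        Finset.min'_le _ _ (Finset.mem_image_of_mem _ ht)
      have ht1 : ∀ t ∈ T, t.1 ≤ a + 1 := by
        intro t ht
        have := (hE a0 ha0T t ht).1
        omega
      have ht2 : ∀ t ∈ T, t.2 ≤ b + 1 := by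
        intro t ht
        have := (hE b0 hb0T t ht).2.1
        omega
      have hne : ((fun p : ℤ × ℤ => ((p.1 : ℝ), (p.2 : ℝ))) '' (T : Set (ℤ × ℤ))).Nonempty :=
        ⟨_, ⟨a0, ha0T, rfl⟩⟩
      by_cases hD : ((a + 1 : ℤ), (b + 1 : ℤ)) ∈ T
      · -- T inside the upper triple
        have hsub : (fun p : ℤ × ℤ => ((p.1 : ℝ), (p.2 : ℝ))) '' (T : Set (ℤ × ℤ)) ⊆
            {((a : ℝ) + 1, (b : ℝ)), ((a : ℝ), (b : ℝ) + 1), ((a : ℝ) + 1, (b : ℝ) + 1)} := by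
          rintro u ⟨t, ht, rfl⟩
          have e1 := hax t ht
          have e2 := hbx t ht
          have e3 := ht1 t ht
          have e4 := ht2 t ht
          have e5 := (hE t ht ((a + 1 : ℤ), (b + 1 : ℤ)) hD).2.2
          simp only at e5
          have : (t.1 = a + 1 ∧ t.2 = b) ∨ (t.1 = a ∧ t.2 = b + 1) ∨
              (t.1 = a + 1 ∧ t.2 = b + 1) := by omega
          rcases this with ⟨f1, f2⟩ | ⟨f1, f2⟩ | ⟨f1, f2⟩ <;>
            · show ((t.1 : ℝ), (t.2 : ℝ)) ∈ _
              rw [f1, f2]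
              push_cast
              simp
        rcases set_cases _ _ _ _ hsub hne with h | h | h | h | h | h | h <;> rw [h] at hΔ
        · exact absurd ⟨_, by rw [hΔ, convexHull_singleton]⟩ hpt
        · exact absurd ⟨_, by rw [hΔ, convexHull_singleton]⟩ hpt
        · exact absurd ⟨_, by rw [hΔ, convexHull_singleton]⟩ hpt
        · -- {(a+1,b),(a,b+1)} : diagonal unit segment
          exfalso
          apply h1
          refine ⟨((a : ℝ), (b : ℝ)), Or.inr (Or.inr ?_)⟩
          rw [hΔ, pair_congr
            (show ((a : ℝ) + 1, (b : ℝ)) = ((a : ℝ), (b : ℝ)) + (1, 0) by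
              simp [Prod.ext_iff])
            (show ((a : ℝ), (b : ℝ) + 1) = ((a : ℝ), (b : ℝ)) + (0, 1) by
              simp [Prod.ext_iff]),
            translate_hull2]
        · -- {(a+1,b),(a+1,b+1)} : vertical unit segment
          exfalso
          apply h1
          refine ⟨((a : ℝ) + 1, (b : ℝ)), Or.inr (Or.inl ?_)⟩
          rw [hΔ, pair_congr
            (show ((a : ℝ) + 1, (b : ℝ)) = ((a : ℝ) + 1, (b : ℝ)) + (0, 0) by
              simp [Prod.ext_iff])
            (show ((a : ℝ) + 1, (b : ℝ) + 1) = ((a : ℝ) + 1, (b : ℝ)) + (0, 1) by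
              simp [Prod.ext_iff]),
            translate_hull2]
        · -- {(a,b+1),(a+1,b+1)} : horizontal unit segment
          exfalso
          apply h1
          refine ⟨((a : ℝ), (b : ℝ) + 1), Or.inl ?_⟩
          rw [hΔ, pair_congr
            (show ((a : ℝ), (b : ℝ) + 1) = ((a : ℝ), (b : ℝ) + 1) + (0, 0) by
              simp [Prod.ext_iff])
            (show ((a : ℝ) + 1, (b : ℝ) + 1) = ((a : ℝ), (b : ℝ) + 1) + (1, 0) by
              simp [Prod.ext_iff]),
            translate_hull2]
        · -- the triple : translate of Δ₂
          have hΔ2 : Δ = ((a : ℝ), (b : ℝ)) +ᵥ Δ₂ := by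
            rw [hΔ, triple_congr
              (show ((a : ℝ) + 1, (b : ℝ)) = ((a : ℝ), (b : ℝ)) + (1, 0) by
                simp [Prod.ext_iff])
              (show ((a : ℝ), (b : ℝ) + 1) = ((a : ℝ), (b : ℝ)) + (0, 1) by
                simp [Prod.ext_iff])
              (show ((a : ℝ) + 1, (b : ℝ) + 1) = ((a : ℝ), (b : ℝ)) + (1, 1) by
                simp [Prod.ext_iff]),
              translate_hull3]
            rfl
          rw [hΔ2, add_vadd_comm', measure_vadd]
          exact vol_sum_d2_ge
      · -- T inside the lower triple
        have hsub : (fun p : ℤ × ℤ => ((p.1 : ℝ), (p.2 : ℝ))) '' (T : Set (ℤ × ℤ)) ⊆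
            {((a : ℝ), (b : ℝ)), ((a : ℝ) + 1, (b : ℝ)), ((a : ℝ), (b : ℝ) + 1)} := by
          rintro u ⟨t, ht, rfl⟩
          have e1 := hax t ht
          have e2 := hbx t ht
          have e3 := ht1 t ht
          have e4 := ht2 t ht
          have e5 : ¬(t.1 = a + 1 ∧ t.2 = b + 1) := by
            rintro ⟨f1, f2⟩
            apply hD
            have : ((a + 1 : ℤ), (b + 1 : ℤ)) = t := by
              rw [← f1, ← f2]
            rw [this]
            exact ht
          have : (t.1 = a ∧ t.2 = b) ∨ (t.1 = a + 1 ∧ t.2 = b) ∨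
              (t.1 = a ∧ t.2 = b + 1) := by omega
          rcases this with ⟨f1, f2⟩ | ⟨f1, f2⟩ | ⟨f1, f2⟩ <;>
            · show ((t.1 : ℝ), (t.2 : ℝ)) ∈ _
              rw [f1, f2]
              push_cast
              simp
        rcases set_cases _ _ _ _ hsub hne with h | h | h | h | h | h | h <;> rw [h] at hΔ
        · exact absurd ⟨_, by rw [hΔ, convexHull_singleton]⟩ hpt
        · exact absurd ⟨_, by rw [hΔ, convexHull_singleton]⟩ hpt
        · exact absurd ⟨_, by rw [hΔ, convexHull_singleton]⟩ hpt
        · -- {(a,b),(a+1,b)} : horizontal unit segment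
          exfalso
          apply h1
          refine ⟨((a : ℝ), (b : ℝ)), Or.inl ?_⟩
          rw [hΔ, pair_congr
            (show ((a : ℝ), (b : ℝ)) = ((a : ℝ), (b : ℝ)) + (0, 0) by simp [Prod.ext_iff])
            (show ((a : ℝ) + 1, (b : ℝ)) = ((a : ℝ), (b : ℝ)) + (1, 0) by simp [Prod.ext_iff]),
            translate_hull2]
        · -- {(a,b),(a,b+1)} : vertical unit segment
          exfalso
          apply h1
          refine ⟨((a : ℝ), (b : ℝ)), Or.inr (Or.inl ?_)⟩
          rw [hΔ, pair_congr
            (show ((a : ℝ), (b : ℝ)) = ((a : ℝ), (b : ℝ)) + (0, 0) by simp [Prod.ext_iff])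
            (show ((a : ℝ), (b : ℝ) + 1) = ((a : ℝ), (b : ℝ)) + (0, 1) by simp [Prod.ext_iff]),
            translate_hull2]
        · -- {(a+1,b),(a,b+1)} : diagonal unit segment
          exfalso
          apply h1
          refine ⟨((a : ℝ), (b : ℝ)), Or.inr (Or.inr ?_)⟩
          rw [hΔ, pair_congr
            (show ((a : ℝ) + 1, (b : ℝ)) = ((a : ℝ), (b : ℝ)) + (1, 0) by simp [Prod.ext_iff])
            (show ((a : ℝ), (b : ℝ) + 1) = ((a : ℝ), (b : ℝ)) + (0, 1) by simp [Prod.ext_iff]),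
            translate_hull2]
        · -- the triple : translate of Δ₁
          exfalso
          apply h2
          refine ⟨((a : ℝ), (b : ℝ)), ?_⟩
          rw [hΔ, triple_congr
            (show ((a : ℝ), (b : ℝ)) = ((a : ℝ), (b : ℝ)) + (0, 0) by simp [Prod.ext_iff])
            (show ((a : ℝ) + 1, (b : ℝ)) = ((a : ℝ), (b : ℝ)) + (1, 0) by simp [Prod.ext_iff])
            (show ((a : ℝ), (b : ℝ) + 1) = ((a : ℝ), (b : ℝ)) + (0, 1) by simp [Prod.ext_iff]),
            translate_hull3]
          rfl
    · -- some pair is far apart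
      simp only [not_forall, Classical.not_imp] at hE
      obtain ⟨p, hp, q, hq, hpq⟩ := hE
      have hPmem : ((p.1 : ℝ), (p.2 : ℝ)) ∈ Δ := by
        rw [hΔ]; exact subset_convexHull ℝ _ ⟨p, hp, rfl⟩
      have hQmem : ((q.1 : ℝ), (q.2 : ℝ)) ∈ Δ := by
        rw [hΔ]; exact subset_convexHull ℝ _ ⟨q, hq, rfl⟩
      have hconv : Convex ℝ Δ := hΔ ▸ convex_convexHull ℝ _
      have hseg : segment ℝ ((p.1 : ℝ), (p.2 : ℝ)) ((q.1 : ℝ), (q.2 : ℝ)) ⊆ Δ :=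
        hconv.segment_subset hPmem hQmem
      have hmono : volume (Δ₁ + segment ℝ ((p.1 : ℝ), (p.2 : ℝ)) ((q.1 : ℝ), (q.2 : ℝ)))
          ≤ volume (Δ₁ + Δ) := measure_mono (Set.add_subset_add_left hseg)
      by_cases hA : q.1 - p.1 ≤ 1
      · by_cases hB : q.2 - p.2 ≤ 1
        · have hC : ¬(q.1 + q.2 - (p.1 + p.2) ≤ 1) := fun hc => hpq ⟨hA, hB, hc⟩
          have hd1 : q.1 = p.1 + 1 := by omega
          have hd2 : q.2 = p.2 + 1 := by omega
          have hQP : ((q.1 : ℝ), (q.2 : ℝ)) = ((p.1 : ℝ), (p.2 : ℝ)) + (1, 1) := by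
            rw [hd1, hd2]; push_cast; simp [Prod.ext_iff]
          refine le_trans ?_ hmono
          rw [hQP]
          exact lemV_diag _
        · have hIB : p.2 + 2 ≤ q.2 := by omega
          have hIB' : (p.2 : ℝ) + 2 ≤ (q.2 : ℝ) := by exact_mod_cast hIB
          exact le_trans (lemV_y ((p.1 : ℝ), (p.2 : ℝ)) ((q.1 : ℝ), (q.2 : ℝ)) hIB') hmono
      · have hIA : p.1 + 2 ≤ q.1 := by omega
        have hIA' : (p.1 : ℝ) + 2 ≤ (q.1 : ℝ) := by exact_mod_cast hIA
        exact le_trans (lemV_x ((p.1 : ℝ), (p.2 : ℝ)) ((q.1 : ℝ), (q.2 : ℝ)) hIA') hmono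

lemma neg_set_vadd (v : ℝ × ℝ) (X : Set (ℝ × ℝ)) : -(v +ᵥ X) = (-v) +ᵥ (-X) := by
  ext p
  simp only [Set.mem_neg, Set.mem_vadd_set, vadd_eq_add]
  constructor
  · rintro ⟨x, hx, heq⟩
    refine ⟨-x, by simpa using hx, ?_⟩
    have hp : p = -(v + x) := by rw [heq, neg_neg]
    rw [hp]
    abel
  · rintro ⟨x, hx, rfl⟩
    exact ⟨-x, by simpa using hx, by abel⟩

lemma neg_hull2 (x y : ℝ × ℝ) : -(convexHull ℝ {x, y}) = convexHull ℝ {-x, -y} := by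
  rw [← convexHull_neg]
  congr 1
  rw [Set.neg_insert, Set.neg_singleton]

lemma neg_hull3 (x y z : ℝ × ℝ) :
    -(convexHull ℝ ({x, y, z} : Set (ℝ × ℝ))) = convexHull ℝ ({-x, -y, -z} : Set (ℝ × ℝ)) := by
  rw [← convexHull_neg]
  congr 1
  rw [Set.neg_insert, Set.neg_insert, Set.neg_singleton]

lemma d2_via_d1 : Δ₂ = ((1 : ℝ), (1 : ℝ)) +ᵥ (-Δ₁) := by
  show Δ₂ = ((1 : ℝ), (1 : ℝ)) +ᵥ
    (-(convexHull ℝ {((0 : ℝ), (0 : ℝ)), ((1 : ℝ), (0 : ℝ)), ((0 : ℝ), (1 : ℝ))}))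
  rw [neg_hull3, ← convexHull_vadd, vadd_triple]
  show Δ₂ = convexHull ℝ _
  rw [show ((1 : ℝ), (1 : ℝ)) + -((0 : ℝ), (0 : ℝ)) = ((1 : ℝ), (1 : ℝ)) by
      simp [Prod.ext_iff],
    show ((1 : ℝ), (1 : ℝ)) + -((1 : ℝ), (0 : ℝ)) = ((0 : ℝ), (1 : ℝ)) by
      norm_num [Prod.ext_iff],
    show ((1 : ℝ), (1 : ℝ)) + -((0 : ℝ), (1 : ℝ)) = ((1 : ℝ), (0 : ℝ)) by
      norm_num [Prod.ext_iff]]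
  show convexHull ℝ _ = _
  congr 1
  ext p
  simp only [Set.mem_insert_iff, Set.mem_singleton_iff]
  tauto

lemma useg_neg (Δ : Set (ℝ × ℝ)) (h : IsUnitSegmentTranslate Δ) :
    IsUnitSegmentTranslate (-Δ) := by
  obtain ⟨v, h | h | h⟩ := h
  · refine ⟨-v + ((-1 : ℝ), (0 : ℝ)), Or.inl ?_⟩
    rw [h, neg_set_vadd, neg_hull2,
      pair_congr
        (show -((0 : ℝ), (0 : ℝ)) = ((-1 : ℝ), (0 : ℝ)) + ((1 : ℝ), (0 : ℝ)) by
          norm_num [Prod.ext_iff])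
        (show -((1 : ℝ), (0 : ℝ)) = ((-1 : ℝ), (0 : ℝ)) + ((0 : ℝ), (0 : ℝ)) by
          norm_num [Prod.ext_iff]),
      translate_hull2, vadd_vadd, Set.pair_comm ((1 : ℝ), (0 : ℝ)) ((0 : ℝ), (0 : ℝ))]
  · refine ⟨-v + ((0 : ℝ), (-1 : ℝ)), Or.inr (Or.inl ?_)⟩
    rw [h, neg_set_vadd, neg_hull2,
      pair_congr
        (show -((0 : ℝ), (0 : ℝ)) = ((0 : ℝ), (-1 : ℝ)) + ((0 : ℝ), (1 : ℝ)) by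
          norm_num [Prod.ext_iff])
        (show -((0 : ℝ), (1 : ℝ)) = ((0 : ℝ), (-1 : ℝ)) + ((0 : ℝ), (0 : ℝ)) by
          norm_num [Prod.ext_iff]),
      translate_hull2, vadd_vadd, Set.pair_comm ((0 : ℝ), (1 : ℝ)) ((0 : ℝ), (0 : ℝ))]
  · refine ⟨-v + ((-1 : ℝ), (-1 : ℝ)), Or.inr (Or.inr ?_)⟩
    rw [h, neg_set_vadd, neg_hull2,
      pair_congr
        (show -((1 : ℝ), (0 : ℝ)) = ((-1 : ℝ), (-1 : ℝ)) + ((0 : ℝ), (1 : ℝ)) by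
          norm_num [Prod.ext_iff])
        (show -((0 : ℝ), (1 : ℝ)) = ((-1 : ℝ), (-1 : ℝ)) + ((1 : ℝ), (0 : ℝ)) by
          norm_num [Prod.ext_iff]),
      translate_hull2, vadd_vadd, Set.pair_comm ((0 : ℝ), (1 : ℝ)) ((1 : ℝ), (0 : ℝ))]

theorem tri2 (T : Finset (ℤ × ℤ)) (hT : T.Nonempty) (Δ : Set (ℝ × ℝ))
    (hΔ : Δ = convexHull ℝ ((fun p : ℤ × ℤ => ((p.1 : ℝ), (p.2 : ℝ))) '' (T : Set (ℤ × ℤ))))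
    (hpt : ¬ ∃ p, Δ = {p}) : AreaTrichotomy Δ₂ Δ := by
  set T' := T.image (fun p : ℤ × ℤ => (-p.1, -p.2)) with hT'def
  have hT'ne : T'.Nonempty := hT.image _
  have hΔ' : -Δ = convexHull ℝ
      ((fun p : ℤ × ℤ => ((p.1 : ℝ), (p.2 : ℝ))) '' (T' : Set (ℤ × ℤ))) := by
    rw [hΔ, ← convexHull_neg]
    congr 1
    ext u
    simp only [Set.mem_neg, Set.mem_image, hT'def, Finset.coe_image, Finset.mem_coe]
    constructor
    · rintro ⟨t, ht, hteq⟩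
      refine ⟨(-t.1, -t.2), ⟨t, ht, rfl⟩, ?_⟩
      have : u = -((t.1 : ℝ), (t.2 : ℝ)) := by rw [hteq]; rw [neg_neg]
      rw [this]
      simp [Prod.ext_iff]
    · rintro ⟨t', ⟨t, ht, rfl⟩, rfl⟩
      refine ⟨t, ht, ?_⟩
      simp [Prod.ext_iff]
  have hpt' : ¬ ∃ p, -Δ = {p} := by
    rintro ⟨pp, hpp⟩
    apply hpt
    refine ⟨-pp, ?_⟩
    rw [← neg_neg Δ, hpp, Set.neg_singleton]
  have hAT := tri1 T' hT'ne (-Δ) hΔ' hpt'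
  have hvol : volume (Δ₂ + Δ) = volume (Δ₁ + -Δ) := by
    have h1 : Δ₂ + Δ = ((1 : ℝ), (1 : ℝ)) +ᵥ (-Δ₁ + Δ) := by
      calc Δ₂ + Δ = (((1 : ℝ), (1 : ℝ)) +ᵥ (-Δ₁)) + Δ := by rw [← d2_via_d1]
        _ = Δ + (((1 : ℝ), (1 : ℝ)) +ᵥ (-Δ₁)) := add_comm _ _
        _ = ((1 : ℝ), (1 : ℝ)) +ᵥ (Δ + -Δ₁) := add_vadd_comm' _ _ _
        _ = ((1 : ℝ), (1 : ℝ)) +ᵥ (-Δ₁ + Δ) := by rw [add_comm Δ (-Δ₁)]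
    have h2 : -Δ₁ + Δ = -(Δ₁ + -Δ) := by
      rw [neg_add_rev, neg_neg, add_comm]
    rw [h1, measure_vadd, h2, Measure.measure_neg]
  refine ⟨?_, ?_, ?_⟩
  · intro h
    rw [hvol]
    exact hAT.1 (useg_neg _ h)
  · rintro ⟨v, hv⟩
    rw [hvol]
    apply hAT.2.1
    refine ⟨-(v + ((1 : ℝ), (1 : ℝ))), ?_⟩
    rw [hv, d2_via_d1, vadd_vadd, neg_set_vadd, neg_neg]
  · intro hs hd2
    rw [hvol]
    apply hAT.2.2
    · intro hcon
      apply hs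
      have := useg_neg _ hcon
      rwa [neg_neg] at this
    · rintro ⟨u, hu⟩
      apply hd2
      refine ⟨-u + -((1 : ℝ), (1 : ℝ)), ?_⟩
      have hnegd1 : -Δ₁ = (-((1 : ℝ), (1 : ℝ))) +ᵥ Δ₂ := by
        rw [d2_via_d1, vadd_vadd, neg_add_cancel, zero_vadd]
      calc Δ = -(-Δ) := (neg_neg Δ).symm
        _ = -(u +ᵥ Δ₁) := by rw [hu]
        _ = -u +ᵥ (-Δ₁) := neg_set_vadd u Δ₁
        _ = -u +ᵥ ((-((1 : ℝ), (1 : ℝ))) +ᵥ Δ₂) := by rw [hnegd1]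
        _ = (-u + -((1 : ℝ), (1 : ℝ))) +ᵥ Δ₂ := vadd_vadd _ _ _


/-- **Area of the Minkowski sum of a unit triangle with a lattice polytope** (Lemma
`area2` of the paper): for `Δ = conv(T)` a lattice polytope which is not a point, the
area of `Δᵢ + Δ` is `3/2` if `Δ` is a unit lattice segment (up to translation), `2` if
`Δ` is a translate of `Δᵢ`, and at least `5/2` otherwise. -/
theorem area_minkowski_sum_unit_triangle (T : Finset (ℤ × ℤ)) (hT : T.Nonempty)
    (Δ : Set (ℝ × ℝ))
    (hΔ : Δ = convexHull ℝ ((fun p : ℤ × ℤ => ((p.1 : ℝ), (p.2 : ℝ))) '' (T : Set (ℤ × ℤ))))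
    (hpt : ¬ ∃ p, Δ = {p}) :
    AreaTrichotomy Δ₁ Δ ∧ AreaTrichotomy Δ₂ Δ :=
  ⟨tri1 T hT Δ hΔ hpt, tri2 T hT Δ hΔ hpt⟩
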